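/- arXiv:0904.2471 — 5 statements merged into one kernel-verified Lean document; each statement's English description precedes it below -/
import Mathlib

section
/- For every m ∈ (0,1], the function u : (−∞,0] → (0,1] defined by u(s) = h⁻¹(h(m)e^{s}) is differentiable and satisfies u'(s) = V(u(s)) for all s ≤ 0, together with u(0) = m. In other words, the backward flow of the ODE du/ds = V(u) through m at time 0 is given explicitly by π_s(m) = h⁻¹(h(m)e^{s}) for s ≤ 0. -/
open Set Filter Real intervalIntegral Topology

set_option maxHeartbeats 2000000 in
theorem stmt_1
    (V : ℝ → ℝ)
    (hV : ContDiffOn ℝ 1 V (Set.Icc 0 1))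
    (hV0 : V 0 = 0)
    (hVpos : ∀ m ∈ Set.Ioc (0:ℝ) 1, 0 < V m)
    (hVdiv : ∀ m ∈ Set.Ioc (0:ℝ) 1,
      ¬ IntervalIntegrable (fun s => (V s)⁻¹) MeasureTheory.volume 0 m)
    (h hinv : ℝ → ℝ)
    (hHdef : ∀ m ∈ Set.Ioc (0:ℝ) 1, h m = Real.exp (-∫ s in m..1, (V s)⁻¹))
    (hH0 : h 0 = 0)
    (hHcont : ContinuousOn h (Set.Icc 0 1))
    (hHmono : StrictMonoOn h (Set.Icc 0 1))
    (hHbij : Set.BijOn h (Set.Icc 0 1) (Set.Icc 0 1))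
    (hinvH : ∀ m ∈ Set.Icc (0:ℝ) 1, hinv (h m) = m)
    (hHinv : ∀ x ∈ Set.Icc (0:ℝ) 1, h (hinv x) = x)
    (hinvMaps : Set.MapsTo hinv (Set.Icc 0 1) (Set.Icc 0 1))
 :
    ∀ m ∈ Set.Ioc (0:ℝ) 1,
      (∀ s : ℝ, s ≤ 0 → hinv (h m * Real.exp s) ∈ Set.Ioc (0:ℝ) 1) ∧
      hinv (h m * Real.exp 0) = m ∧
      (∀ s : ℝ, s ≤ 0 →
        HasDerivWithinAt (fun s' : ℝ => hinv (h m * Real.exp s'))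
          (V (hinv (h m * Real.exp s))) (Set.Iic 0) s) := by
  have hV1 : (0:ℝ) < V 1 := hVpos 1 ⟨one_pos, le_rfl⟩
  -- basic facts about h
  have hH1 : h 1 = 1 := by
    rw [hHdef 1 ⟨one_pos, le_rfl⟩]; simp
  have hinv1 : hinv 1 = 1 := by
    conv_lhs => rw [← hH1]
    exact hinvH 1 ⟨zero_le_one, le_rfl⟩
  have hMemIoc : ∀ x ∈ Set.Ioc (0:ℝ) 1, h x ∈ Set.Ioc (0:ℝ) 1 := by
    intro x hx
    refine ⟨?_, (hHbij.mapsTo ⟨hx.1.le, hx.2⟩).2⟩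
    rw [hHdef x hx]; exact Real.exp_pos _
  have hinvMemIoc : ∀ x ∈ Set.Ioc (0:ℝ) 1, hinv x ∈ Set.Ioc (0:ℝ) 1 := by
    intro x hx
    have hx' : x ∈ Set.Icc (0:ℝ) 1 := ⟨hx.1.le, hx.2⟩
    have hmem := hinvMaps hx'
    refine ⟨lt_of_le_of_ne hmem.1 ?_, hmem.2⟩
    intro h0
    have : h (hinv x) = 0 := by rw [← h0, hH0]
    rw [hHinv x hx'] at this
    exact absurd this (ne_of_gt hx.1)
  -- continuity of V⁻¹ on Ioc 0 1
  have hVcont : ContinuousOn V (Set.Icc 0 1) := hV.continuousOn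
  have hVinvCont : ContinuousOn (fun s => (V s)⁻¹) (Set.Ioc 0 1) := by
    apply ContinuousOn.inv₀ (hVcont.mono Set.Ioc_subset_Icc_self)
    intro x hx; exact ne_of_gt (hVpos x hx)
  -- derivative of h within Iic 1 at points of Ioc 0 1
  have hIntegrable : ∀ a ∈ Set.Ioc (0:ℝ) 1,
      IntervalIntegrable (fun s => (V s)⁻¹) MeasureTheory.volume 1 a := by
    intro a ha
    apply ContinuousOn.intervalIntegrable
    apply hVinvCont.mono
    rw [Set.uIcc_of_ge ha.2]
    exact fun y hy => ⟨lt_of_lt_of_le ha.1 hy.1, hy.2⟩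
  have hExpEq : ∀ y ∈ Set.Ioc (0:ℝ) 1,
      h y = Real.exp (∫ s in (1:ℝ)..y, (V s)⁻¹) := by
    intro y hy
    rw [hHdef y hy, intervalIntegral.integral_symm, neg_neg]
  have hderivh : ∀ a ∈ Set.Ioc (0:ℝ) 1,
      HasDerivWithinAt h (h a * (V a)⁻¹) (Set.Iic 1) a := by
    intro a ha
    rcases lt_or_eq_of_le ha.2 with hlt | heq
    · -- interior point : full derivative
      have haIoo : a ∈ Set.Ioo (0:ℝ) 1 := ⟨ha.1, hlt⟩
      have hnhds : Set.Ioo (0:ℝ) 1 ∈ 𝓝 a := Ioo_mem_nhds ha.1 hlt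
      have hmeas : StronglyMeasurableAtFilter (fun s => (V s)⁻¹)
          (𝓝 a) MeasureTheory.volume :=
        ⟨Set.Ioo 0 1, hnhds,
          (hVinvCont.mono Set.Ioo_subset_Ioc_self).aestronglyMeasurable measurableSet_Ioo⟩
      have hcont : ContinuousAt (fun s => (V s)⁻¹) a :=
        (hVinvCont.mono Set.Ioo_subset_Ioc_self).continuousAt hnhds
      have hI : HasDerivAt (fun y => ∫ s in (1:ℝ)..y, (V s)⁻¹) ((V a)⁻¹) a :=
        intervalIntegral.integral_hasDerivAt_right (hIntegrable a ha) hmeas hcont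
      have hE : HasDerivAt (fun y => Real.exp (∫ s in (1:ℝ)..y, (V s)⁻¹))
          (Real.exp (∫ s in (1:ℝ)..a, (V s)⁻¹) * (V a)⁻¹) a := hI.exp
      have heq : (fun y => Real.exp (∫ s in (1:ℝ)..y, (V s)⁻¹)) =ᶠ[𝓝 a] h := by
        filter_upwards [hnhds] with y hy
        exact (hExpEq y ⟨hy.1, hy.2.le⟩).symm
      have := hE.congr_of_eventuallyEq heq.symm
      rw [← hExpEq a ha] at this
      exact this.hasDerivWithinAt
    · -- boundary point a = 1
      subst heq
      have hmeas : StronglyMeasurableAtFilter (fun s => (V s)⁻¹)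
          (𝓝[Set.Iic 1] 1) MeasureTheory.volume :=
        ⟨Set.Ioc 0 1, by
          have : Set.Ioc (0:ℝ) 1 = Set.Iic 1 ∩ Set.Ioi 0 := by
            ext y; simp [Set.mem_Ioc, Set.mem_Iic, Set.mem_Ioi, and_comm]
          rw [this]
          exact inter_mem_nhdsWithin _ (Ioi_mem_nhds one_pos),
          hVinvCont.aestronglyMeasurable measurableSet_Ioc⟩
      have hcont : ContinuousWithinAt (fun s => (V s)⁻¹) (Set.Iic 1) 1 := by
        apply (hVinvCont 1 ⟨one_pos, le_rfl⟩).mono_of_mem_nhdsWithin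
        have : Set.Ioc (0:ℝ) 1 = Set.Iic 1 ∩ Set.Ioi 0 := by
          ext y; simp [Set.mem_Ioc, Set.mem_Iic, Set.mem_Ioi, and_comm]
        rw [this]
        exact inter_mem_nhdsWithin _ (Ioi_mem_nhds one_pos)
      have hI : HasDerivWithinAt (fun y => ∫ s in (1:ℝ)..y, (V s)⁻¹) ((V 1)⁻¹)
          (Set.Iic 1) 1 :=
        intervalIntegral.integral_hasDerivWithinAt_right (hIntegrable 1 ha) hmeas hcont
      have hE : HasDerivWithinAt (fun y => Real.exp (∫ s in (1:ℝ)..y, (V s)⁻¹))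
          (Real.exp (∫ s in (1:ℝ)..(1:ℝ), (V s)⁻¹) * (V 1)⁻¹) (Set.Iic 1) 1 := hI.exp
      have heq : (fun y => Real.exp (∫ s in (1:ℝ)..y, (V s)⁻¹)) =ᶠ[𝓝[Set.Iic 1] 1] h := by
        have hmem : Set.Ioc (0:ℝ) 1 ∈ 𝓝[Set.Iic 1] 1 := by
          have : Set.Ioc (0:ℝ) 1 = Set.Iic 1 ∩ Set.Ioi 0 := by
            ext y; simp [Set.mem_Ioc, Set.mem_Iic, Set.mem_Ioi, and_comm]
          rw [this]
          exact inter_mem_nhdsWithin _ (Ioi_mem_nhds one_pos)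
        filter_upwards [hmem] with y hy
        exact (hExpEq y hy).symm
      have := hE.congr_of_eventuallyEq heq.symm (by rw [← hExpEq 1 ha])
      rw [← hExpEq 1 ha] at this
      exact this
  -- extended functions
  set H : ℝ → ℝ := fun y => if y ≤ 1 then h y else 1 + (y - 1) * (V 1)⁻¹ with hHdefn
  set G : ℝ → ℝ := fun y => if y ≤ 1 then hinv y else 1 + (y - 1) * V 1 with hGdefn
  have hHeq : ∀ y ∈ Set.Iic (1:ℝ), H y = h y := fun y hy => if_pos hy
  have hGeq : ∀ y ∈ Set.Iic (1:ℝ), G y = hinv y := fun y hy => if_pos hy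
  -- derivative of H at every point of Ioc 0 1 (full derivative)
  have hderivH : ∀ a ∈ Set.Ioc (0:ℝ) 1, HasDerivAt H (h a * (V a)⁻¹) a := by
    intro a ha
    have hleft : HasDerivWithinAt H (h a * (V a)⁻¹) (Set.Iic 1) a :=
      (hderivh a ha).congr hHeq (hHeq a ha.2)
    rcases lt_or_eq_of_le ha.2 with hlt | heq
    · exact hleft.hasDerivAt (Iic_mem_nhds hlt)
    · subst heq
      have hlin : HasDerivAt (fun y : ℝ => 1 + (y - 1) * (V 1)⁻¹) ((V 1)⁻¹) 1 := by
        have : HasDerivAt (fun y : ℝ => 1 + (y - 1) * (V 1)⁻¹)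
            (0 + (1 - 0) * (V 1)⁻¹) 1 :=
          (hasDerivAt_const 1 (1:ℝ)).add
            (((hasDerivAt_id 1).sub (hasDerivAt_const 1 (1:ℝ))).mul_const _)
        simpa using this
      have hright : HasDerivWithinAt H ((V 1)⁻¹) (Set.Ici 1) 1 := by
        apply hlin.hasDerivWithinAt.congr
        · intro y hy
          rcases eq_or_lt_of_le (Set.mem_Ici.mp hy : (1:ℝ) ≤ y) with h1 | h1
          · rw [hHdefn]; simp only [← h1, if_pos le_rfl, hH1]; ring
          · rw [hHdefn]; simp only [if_neg (not_le.mpr h1)]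
        · rw [hHdefn]; simp [hH1]
      have h1' : h 1 * (V 1)⁻¹ = (V 1)⁻¹ := by rw [hH1, one_mul]
      rw [h1']
      have := (hleft.congr (fun y _ => rfl) rfl)
      rw [h1'] at this
      have hu := this.union hright
      rw [Set.Iic_union_Ici] at hu
      exact hasDerivWithinAt_univ.mp hu
  -- strict monotonicity of hinv on Icc 0 1
  have hinvMono : StrictMonoOn hinv (Set.Icc 0 1) := by
    intro x hx y hy hxy
    by_contra hcon
    push_neg at hcon
    have := (hHmono.monotoneOn) (hinvMaps hy) (hinvMaps hx) hcon
    rw [hHinv x hx, hHinv y hy] at this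
    exact absurd this (not_le.mpr hxy)
  have himg : hinv '' Set.Icc 0 1 = Set.Icc 0 1 := by
    apply Set.Subset.antisymm (Set.image_subset_iff.mpr hinvMaps)
    intro a ha
    exact ⟨h a, hHbij.mapsTo ha, hinvH a ha⟩
  -- continuity of G at each point of Ioc 0 1
  have hGcont : ∀ x ∈ Set.Ioc (0:ℝ) 1, ContinuousAt G x := by
    intro x hx
    rcases lt_or_eq_of_le hx.2 with hlt | heq
    · have hinvx : hinv x ∈ Set.Ioc (0:ℝ) 1 := hinvMemIoc x hx
      have hinvxlt : hinv x < 1 := by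
        rcases lt_or_eq_of_le hinvx.2 with h1 | h1
        · exact h1
        · exfalso
          have : h (hinv x) = 1 := by rw [h1, hH1]
          rw [hHinv x ⟨hx.1.le, hx.2⟩] at this
          exact absurd this (ne_of_lt hlt)
      have hca : ContinuousAt hinv x := by
        apply hinvMono.continuousAt_of_image_mem_nhds
          (Icc_mem_nhds hx.1 hlt)
        rw [himg]
        exact Icc_mem_nhds hinvx.1 hinvxlt
      apply hca.congr
      filter_upwards [Iio_mem_nhds hlt] with y hy
      exact (hGeq y (Set.mem_Iic.mpr hy.le)).symm
    · subst heq
      have hIccIic : Set.Icc (0:ℝ) 1 ∈ 𝓝[Set.Iic 1] (1:ℝ) :=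
        Icc_mem_nhdsLE_of_mem ⟨one_pos, le_rfl⟩
      have hleft : ContinuousWithinAt hinv (Set.Iic 1) 1 := by
        apply hinvMono.continuousWithinAt_left_of_image_mem_nhdsWithin hIccIic
        rw [himg, hinv1]
        exact hIccIic
      have hleftG : ContinuousWithinAt G (Set.Iic 1) 1 :=
        hleft.congr hGeq (hGeq 1 (Set.mem_Iic.mpr le_rfl))
      have hlin : Continuous (fun y : ℝ => 1 + (y - 1) * V 1) := by continuity
      have hrightG : ContinuousWithinAt G (Set.Ici 1) 1 := by
        apply (hlin.continuousWithinAt).congr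
        · intro y hy
          rcases eq_or_lt_of_le (Set.mem_Ici.mp hy : (1:ℝ) ≤ y) with h1 | h1
          · rw [hGdefn]; simp [← h1, hinv1]
          · rw [hGdefn]; simp [if_neg (not_le.mpr h1)]
        · rw [hGdefn]; simp [hinv1]
      have hu := hleftG.union hrightG
      rw [Set.Iic_union_Ici] at hu
      rwa [continuousWithinAt_univ] at hu
  -- G is a left inverse of H on Ioi 0
  have hHG : ∀ y : ℝ, 0 < y → H (G y) = y := by
    intro y hy
    by_cases hy1 : y ≤ 1
    · have hyIcc : y ∈ Set.Icc (0:ℝ) 1 := ⟨hy.le, hy1⟩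
      rw [hGeq y (Set.mem_Iic.mpr hy1), hHeq _ (Set.mem_Iic.mpr (hinvMaps hyIcc).2),
        hHinv y hyIcc]
    · push_neg at hy1
      have hVne : V 1 ≠ 0 := ne_of_gt hV1
      have hG1 : (1:ℝ) < 1 + (y - 1) * V 1 := by nlinarith
      have hG : G y = 1 + (y - 1) * V 1 := by
        rw [hGdefn]; simp only [if_neg (not_le.mpr hy1)]
      have hH : H (1 + (y - 1) * V 1) = 1 + ((1 + (y - 1) * V 1) - 1) * (V 1)⁻¹ := by
        rw [hHdefn]; simp only [if_neg (not_le.mpr hG1)]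
      rw [hG, hH]
      field_simp
      ring
  -- now the main statement
  intro m hm
  have hmIcc : m ∈ Set.Icc (0:ℝ) 1 := ⟨hm.1.le, hm.2⟩
  have hhm : h m ∈ Set.Ioc (0:ℝ) 1 := hMemIoc m hm
  have hxmem : ∀ s : ℝ, s ≤ 0 → h m * Real.exp s ∈ Set.Ioc (0:ℝ) 1 := by
    intro s hs
    constructor
    · have := hhm.1; positivity
    · calc h m * Real.exp s ≤ h m * 1 := by
            apply mul_le_mul_of_nonneg_left (Real.exp_le_one_iff.mpr hs) hhm.1.le
        _ = h m := mul_one _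
        _ ≤ 1 := hhm.2
  refine ⟨fun s hs => hinvMemIoc _ (hxmem s hs), ?_, ?_⟩
  · rw [Real.exp_zero, mul_one]; exact hinvH m hmIcc
  · intro s hs
    set x : ℝ := h m * Real.exp s with hxdef
    have hxIoc : x ∈ Set.Ioc (0:ℝ) 1 := hxmem s hs
    have hxIcc : x ∈ Set.Icc (0:ℝ) 1 := ⟨hxIoc.1.le, hxIoc.2⟩
    set a : ℝ := hinv x with hadef
    have haIoc : a ∈ Set.Ioc (0:ℝ) 1 := hinvMemIoc x hxIoc
    have hGx : G x = a := hGeq x hxIoc.2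
    have hha : h a = x := hHinv x hxIcc
    have hf' : h a * (V a)⁻¹ ≠ 0 := by
      apply ne_of_gt
      have := hVpos a haIoc
      rw [hha]
      have hx0 := hxIoc.1
      positivity
    have hGderiv : HasDerivAt G ((h a * (V a)⁻¹)⁻¹) x := by
      apply HasDerivAt.of_local_left_inverse (hGcont x hxIoc)
        (by rw [hGx]; exact hderivH a haIoc) hf'
      filter_upwards [Ioi_mem_nhds hxIoc.1] with y hy
      exact hHG y hy
    have hinner : HasDerivAt (fun s' : ℝ => h m * Real.exp s') (h m * Real.exp s) s :=
      (Real.hasDerivAt_exp s).const_mul (h m)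
    have hcomp : HasDerivAt (fun s' : ℝ => G (h m * Real.exp s'))
        ((h a * (V a)⁻¹)⁻¹ * (h m * Real.exp s)) s := by have := hGderiv.comp s hinner; exact this
    have hval : (h a * (V a)⁻¹)⁻¹ * (h m * Real.exp s) = V a := by
      rw [hha]
      have hx0 : x ≠ 0 := ne_of_gt hxIoc.1
      have hV0' : V a ≠ 0 := ne_of_gt (hVpos a haIoc)
      rw [← hxdef]
      field_simp
    rw [hval] at hcomp
    apply hcomp.hasDerivWithinAt.congr
    · intro s' hs'
      exact (hGeq _ (Set.mem_Iic.mpr (hxmem s' hs').2)).symm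
    · exact (hGeq _ (Set.mem_Iic.mpr hxIoc.2)).symm
end

section
/- Let w : [0,g(1)] → ℝ be continuous and λ > 0. Then the function u : [0,g(1)] → ℝ defined by u(m) = (1/h_λ(m)) ∫_0^m w(s) h_λ(s)/(λ V(s)) ds for m ∈ (0,g(1)] and u(0) = w(0) is the unique bounded function on [0,g(1)] that is C¹ on (0,g(1)] and satisfies u(m) + λ V(m) u'(m) = w(m) for all m ∈ (0,g(1)] together with u(0) = w(0); moreover u is continuous on [0,g(1)] and sup_{0≤m≤g(1)} |u(m)| ≤ sup_{0≤m≤g(1)} |w(m)|. -/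
open Set MeasureTheory Filter intervalIntegral Topology

noncomputable def hlamF (V : ℝ → ℝ) (g1 lam m : ℝ) : ℝ :=
  if m = 0 then 0 else Real.exp (∫ s in g1..m, (lam * V s)⁻¹)

noncomputable def uF (V : ℝ → ℝ) (g1 lam : ℝ) (w : ℝ → ℝ) (m : ℝ) : ℝ :=
  if m = 0 then w 0
  else (hlamF V g1 lam m)⁻¹ * ∫ s in (0:ℝ)..m, w s * hlamF V g1 lam s / (lam * V s)

namespace Stmt7

structure Aux (V : ℝ → ℝ) (lam b : ℝ) : Prop where
  hlam : 0 < lam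
  hb : 0 < b
  hb1 : b ≤ 1
  hVc : ContinuousOn V (Set.Icc 0 1)
  hVpos : ∀ m ∈ Set.Ioc (0:ℝ) 1, 0 < V m
  hVdiv : ¬ IntervalIntegrable (fun s => (V s)⁻¹) volume 0 b

noncomputable def phi (V : ℝ → ℝ) (lam s : ℝ) : ℝ := (lam * V s)⁻¹
noncomputable def Fi (V : ℝ → ℝ) (lam b m : ℝ) : ℝ := ∫ s in b..m, phi V lam s
noncomputable def psi (V : ℝ → ℝ) (lam b s : ℝ) : ℝ := Real.exp (Fi V lam b s) * phi V lam s

variable {V : ℝ → ℝ} {lam b : ℝ}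

lemma Aux.phi_pos (A : Aux V lam b) {s : ℝ} (hs : s ∈ Ioc (0:ℝ) 1) : 0 < phi V lam s :=
  inv_pos.2 (mul_pos A.hlam (A.hVpos s hs))

lemma Aux.phi_contOn (A : Aux V lam b) : ContinuousOn (phi V lam) (Ioc 0 1) := by
  apply ContinuousOn.inv₀
  · exact continuousOn_const.mul (A.hVc.mono Ioc_subset_Icc_self)
  · intro s hs
    exact ne_of_gt (mul_pos A.hlam (A.hVpos s hs))

lemma Aux.phi_intble (A : Aux V lam b) {x y : ℝ} (hx : x ∈ Ioc (0:ℝ) 1) (hy : y ∈ Ioc (0:ℝ) 1) :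
    IntervalIntegrable (phi V lam) volume x y := by
  apply ContinuousOn.intervalIntegrable
  apply A.phi_contOn.mono
  rw [uIcc_eq_union]
  rintro z (hz | hz)
  · exact ⟨lt_of_lt_of_le hx.1 hz.1, le_trans hz.2 hy.2⟩
  · exact ⟨lt_of_lt_of_le hy.1 hz.1, le_trans hz.2 hx.2⟩

lemma Aux.mem_b (A : Aux V lam b) : b ∈ Ioc (0:ℝ) 1 := ⟨A.hb, A.hb1⟩

lemma Aux.Fi_add (A : Aux V lam b) {x y : ℝ} (hx : x ∈ Ioc (0:ℝ) 1) (hy : y ∈ Ioc (0:ℝ) 1) :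
    Fi V lam b y = Fi V lam b x + ∫ s in x..y, phi V lam s := by
  rw [Fi, Fi, intervalIntegral.integral_add_adjacent_intervals (A.phi_intble A.mem_b hx)
    (A.phi_intble hx hy)]

lemma Aux.Fi_hasDerivAt (A : Aux V lam b) {m : ℝ} (hm : m ∈ Ioo (0:ℝ) 1) :
    HasDerivAt (Fi V lam b) (phi V lam m) m := by
  have hIoc : Ioc (0:ℝ) 1 ∈ 𝓝 m :=
    Filter.mem_of_superset (Ioo_mem_nhds hm.1 hm.2) Ioo_subset_Ioc_self
  exact intervalIntegral.integral_hasDerivAt_right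
    (A.phi_intble A.mem_b ⟨hm.1, hm.2.le⟩)
    ⟨Ioc 0 1, hIoc, (A.phi_contOn.aestronglyMeasurable measurableSet_Ioc)⟩
    (A.phi_contOn.continuousAt hIoc)

lemma Aux.Fi_hasDerivWithinAt (A : Aux V lam b) {m : ℝ} (hm : m ∈ Ioc (0:ℝ) 1) :
    HasDerivWithinAt (Fi V lam b) (phi V lam m) (Iic m) m := by
  rcases lt_or_eq_of_le hm.2 with h1 | h1
  · exact (A.Fi_hasDerivAt ⟨hm.1, h1⟩).hasDerivWithinAt
  · subst h1
    have hIoc : Ioc (0:ℝ) 1 ∈ 𝓝[Set.Iic (1:ℝ)] 1 := by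
      rw [mem_nhdsWithin]
      exact ⟨Ioi 0, isOpen_Ioi, hm.1, fun y hy => ⟨hy.1, hy.2⟩⟩
    exact intervalIntegral.integral_hasDerivWithinAt_right
      (A.phi_intble A.mem_b hm)
      ⟨Ioc 0 1, hIoc, (A.phi_contOn.aestronglyMeasurable measurableSet_Ioc)⟩
      ((continuousWithinAt_Ioc_iff_Iic hm.1).1 (A.phi_contOn 1 hm))

lemma Aux.Fi_contOn (A : Aux V lam b) : ContinuousOn (Fi V lam b) (Ioc 0 1) := by
  intro m hm
  rcases lt_or_eq_of_le hm.2 with h1 | h1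
  · exact (A.Fi_hasDerivAt ⟨hm.1, h1⟩).continuousAt.continuousWithinAt
  · subst h1
    exact ((A.Fi_hasDerivWithinAt hm).differentiableWithinAt.continuousWithinAt).mono
      (fun y hy => hy.2)

lemma h_eq {m : ℝ} (hm : m ≠ 0) : hlamF V b lam m = Real.exp (Fi V lam b m) := by
  rw [hlamF, if_neg hm]; rfl

lemma h_pos {m : ℝ} (hm : m ≠ 0) : 0 < hlamF V b lam m := by
  rw [h_eq hm]; exact Real.exp_pos _

lemma h_nonneg (m : ℝ) : 0 ≤ hlamF V b lam m := by
  rcases eq_or_ne m 0 with h | h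
  · rw [h, hlamF, if_pos rfl]
  · exact (h_pos h).le

lemma Aux.Fi_nonpos (A : Aux V lam b) {m : ℝ} (hm : m ∈ Ioc (0:ℝ) b) : Fi V lam b m ≤ 0 := by
  have : Fi V lam b m = - ∫ s in m..b, phi V lam s := by
    rw [Fi, intervalIntegral.integral_symm]
  rw [this, neg_nonpos]
  apply intervalIntegral.integral_nonneg hm.2
  intro u hu
  exact (A.phi_pos ⟨lt_of_lt_of_le hm.1 hu.1, le_trans hu.2 A.hb1⟩).le

lemma Aux.h_le_one (A : Aux V lam b) {m : ℝ} (hm : m ∈ Ioc (0:ℝ) b) : hlamF V b lam m ≤ 1 := by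
  rw [h_eq (ne_of_gt hm.1)]
  exact Real.exp_le_one_iff.2 (A.Fi_nonpos hm)

lemma Aux.h_contOn (A : Aux V lam b) : ContinuousOn (hlamF V b lam) (Ioc 0 1) := by
  apply ContinuousOn.congr (Real.continuous_exp.comp_continuousOn A.Fi_contOn)
  intro x hx
  exact h_eq (ne_of_gt hx.1)

lemma Aux.not_integrable (A : Aux V lam b) : ¬ IntegrableOn (phi V lam) (Ioc 0 b) volume := by
  intro h
  apply A.hVdiv
  rw [intervalIntegrable_iff_integrableOn_Ioc_of_le A.hb.le]
  have : (fun s => (V s)⁻¹) = fun s => lam * phi V lam s := by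
    funext s
    simp only [phi, mul_inv, ← mul_assoc, mul_inv_cancel₀ A.hlam.ne', one_mul]
  rw [this]
  exact h.const_mul lam

lemma tendsto_seq_zero (c : ℝ) (hc : 0 < c) :
    Tendsto (fun n : ℕ => c / (n + 2)) atTop (𝓝[>] (0:ℝ)) := by
  rw [tendsto_nhdsWithin_iff]
  constructor
  · apply Filter.Tendsto.div_atTop tendsto_const_nhds
    exact tendsto_atTop_add_const_right _ 2 tendsto_natCast_atTop_atTop
  · filter_upwards with n
    exact mem_Ioi.2 (by positivity)

lemma seq_mem (c : ℝ) (hc : 0 < c) (n : ℕ) : c / (n + 2) ∈ Ioc (0:ℝ) c := by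
  constructor
  · positivity
  · rw [div_le_iff₀ (by positivity)]
    nlinarith [Nat.cast_nonneg (α := ℝ) n]

lemma Aux.I_tendsto (A : Aux V lam b) :
    Tendsto (fun ε => ∫ s in ε..b, phi V lam s) (𝓝[>] (0:ℝ)) atTop := by
  rw [tendsto_atTop]
  intro C
  by_contra hC
  push_neg at hC
  -- from failure of eventual bound, derive: ∀ δ ∈ Ioc 0 b, ∫ δ..b < C is false... we need
  -- the existence of δ with C ≤ I δ
  have key : ∃ δ ∈ Ioc (0:ℝ) b, C ≤ ∫ s in δ..b, phi V lam s := by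
    by_contra hk
    push_neg at hk
    apply A.not_integrable
    apply integrableOn_Ioc_of_intervalIntegral_norm_bounded_left
      (a := fun n : ℕ => b / (n + 2)) (l := atTop) (I := C)
    · intro n
      rw [← intervalIntegrable_iff_integrableOn_Ioc_of_le (seq_mem b A.hb n).2]
      apply A.phi_intble _ A.mem_b
      exact ⟨(seq_mem b A.hb n).1, le_trans (seq_mem b A.hb n).2 A.hb1⟩
    · exact tendsto_nhdsWithin_iff.1 (tendsto_seq_zero b A.hb) |>.1
    · filter_upwards with n
      have hmem := seq_mem b A.hb n
      have heq : ∫ x in Ioc (b / (n+2)) b, ‖phi V lam x‖ = ∫ s in (b/(n+2))..b, phi V lam s := by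
        rw [intervalIntegral.integral_of_le hmem.2]
        apply setIntegral_congr_fun measurableSet_Ioc
        intro x hx
        exact Real.norm_of_nonneg (A.phi_pos ⟨lt_trans hmem.1 hx.1, le_trans hx.2 A.hb1⟩).le
      rw [heq]
      exact (hk _ hmem).le
  obtain ⟨δ, hδ, hCδ⟩ := key
  apply hC
  filter_upwards [Ioo_mem_nhdsGT_of_mem ⟨le_refl 0, hδ.1⟩] with ε hε
  have hε1 : ε ∈ Ioc (0:ℝ) 1 := ⟨hε.1, le_trans (le_of_lt hε.2) (le_trans hδ.2 A.hb1)⟩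
  have hδ1 : δ ∈ Ioc (0:ℝ) 1 := ⟨hδ.1, le_trans hδ.2 A.hb1⟩
  have : ∫ s in ε..b, phi V lam s = (∫ s in ε..δ, phi V lam s) + ∫ s in δ..b, phi V lam s := by
    rw [intervalIntegral.integral_add_adjacent_intervals (A.phi_intble hε1 hδ1)
      (A.phi_intble hδ1 A.mem_b)]
  rw [this]
  have h0 : 0 ≤ ∫ s in ε..δ, phi V lam s := by
    apply intervalIntegral.integral_nonneg hε.2.le
    intro u hu
    exact (A.phi_pos ⟨lt_of_lt_of_le hε.1 hu.1, le_trans hu.2 hδ1.2⟩).le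
  linarith

lemma Aux.h_tendsto (A : Aux V lam b) :
    Tendsto (hlamF V b lam) (𝓝[>] (0:ℝ)) (𝓝 0) := by
  have : Tendsto (fun ε => Real.exp (-(∫ s in ε..b, phi V lam s))) (𝓝[>] (0:ℝ)) (𝓝 0) :=
    Real.tendsto_exp_atBot.comp (tendsto_neg_atTop_atBot.comp A.I_tendsto)
  apply this.congr'
  filter_upwards [self_mem_nhdsWithin] with ε (hε : ε ∈ Ioi (0:ℝ))
  rw [h_eq (ne_of_gt hε), Fi, intervalIntegral.integral_symm, neg_neg]

lemma Aux.h_hasDerivAt (A : Aux V lam b) {m : ℝ} (hm : m ∈ Ioo (0:ℝ) 1) :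
    HasDerivAt (hlamF V b lam) (psi V lam b m) m := by
  have h1 : HasDerivAt (fun x => Real.exp (Fi V lam b x))
      (Real.exp (Fi V lam b m) * phi V lam m) m := (A.Fi_hasDerivAt hm).exp
  apply h1.congr_of_eventuallyEq
  filter_upwards [isOpen_compl_singleton.mem_nhds
    (by exact ne_of_gt hm.1 : m ∈ ({(0:ℝ)}ᶜ : Set ℝ))] with x hx
  exact h_eq hx

lemma Aux.h_hasDerivWithinAt (A : Aux V lam b) {m : ℝ} (hm : m ∈ Ioc (0:ℝ) 1) :
    HasDerivWithinAt (hlamF V b lam) (psi V lam b m) (Iic m) m := by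
  rcases lt_or_eq_of_le hm.2 with h1 | h1
  · exact (A.h_hasDerivAt ⟨hm.1, h1⟩).hasDerivWithinAt
  · subst h1
    have h2 : HasDerivWithinAt (fun x => Real.exp (Fi V lam b x))
        (Real.exp (Fi V lam b 1) * phi V lam 1) (Iic 1) 1 := (A.Fi_hasDerivWithinAt hm).exp
    apply h2.congr_of_eventuallyEq
    · apply mem_nhdsWithin_of_mem_nhds
      filter_upwards [isOpen_compl_singleton.mem_nhds
        (by exact ne_of_gt hm.1 : (1:ℝ) ∈ ({(0:ℝ)}ᶜ : Set ℝ))] with x hx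
      exact h_eq hx
    · exact h_eq (ne_of_gt hm.1)

lemma Aux.psi_contOn (A : Aux V lam b) : ContinuousOn (psi V lam b) (Ioc 0 1) :=
  (Real.continuous_exp.comp_continuousOn A.Fi_contOn).mul A.phi_contOn

lemma Aux.psi_nonneg (A : Aux V lam b) {s : ℝ} (hs : s ∈ Ioc (0:ℝ) 1) : 0 ≤ psi V lam b s :=
  mul_nonneg (Real.exp_pos _).le (A.phi_pos hs).le

lemma psi_eq {s : ℝ} (hs : s ≠ 0) : psi V lam b s = hlamF V b lam s * phi V lam s := by
  rw [psi, h_eq hs]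

lemma Aux.ftc (A : Aux V lam b) {ε m : ℝ} (hε : 0 < ε) (hεm : ε ≤ m) (hm : m ≤ b) :
    ∫ s in ε..m, psi V lam b s = hlamF V b lam m - hlamF V b lam ε := by
  have hsub : Icc ε m ⊆ Ioc 0 1 :=
    fun x hx => ⟨lt_of_lt_of_le hε hx.1, le_trans hx.2 (le_trans hm A.hb1)⟩
  exact intervalIntegral.integral_eq_sub_of_hasDeriv_right_of_le hεm
    (A.h_contOn.mono hsub)
    (fun x hx => (A.h_hasDerivAt ⟨lt_trans hε hx.1,
      lt_of_lt_of_le hx.2 (le_trans hm A.hb1)⟩).hasDerivWithinAt)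
    (((A.psi_contOn.mono hsub).mono (by rw [uIcc_of_le hεm])).intervalIntegrable)

lemma Aux.psi_integrableOn (A : Aux V lam b) {m : ℝ} (hm : m ∈ Ioc (0:ℝ) b) :
    IntegrableOn (psi V lam b) (Ioc 0 m) volume := by
  have hsub1 : Ioc (0:ℝ) m ⊆ Ioc 0 1 := fun x hx => ⟨hx.1, hx.2.trans (hm.2.trans A.hb1)⟩
  apply integrableOn_Ioc_of_intervalIntegral_norm_bounded_left
    (a := fun n : ℕ => m / (n + 2)) (l := atTop) (I := hlamF V b lam m)
  · intro n
    rw [← intervalIntegrable_iff_integrableOn_Ioc_of_le (seq_mem m hm.1 n).2]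
    apply ((A.psi_contOn.mono ?_).mono (by rw [uIcc_of_le (seq_mem m hm.1 n).2])).intervalIntegrable
    exact fun x hx => hsub1 ⟨lt_of_lt_of_le (seq_mem m hm.1 n).1 hx.1, hx.2⟩
  · exact tendsto_nhdsWithin_iff.1 (tendsto_seq_zero m hm.1) |>.1
  · filter_upwards with n
    have hmem := seq_mem m hm.1 n
    have heq : ∫ x in Ioc (m/(n+2)) m, ‖psi V lam b x‖ = ∫ s in (m/(n+2))..m, psi V lam b s := by
      rw [intervalIntegral.integral_of_le hmem.2]
      apply setIntegral_congr_fun measurableSet_Ioc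
      intro x hx
      exact Real.norm_of_nonneg (A.psi_nonneg (hsub1 ⟨lt_trans hmem.1 hx.1, hx.2⟩))
    rw [heq, A.ftc hmem.1 hmem.2 hm.2]
    have := h_nonneg (V := V) (b := b) (lam := lam) (m/(n+2))
    linarith

lemma Aux.psi_setIntegral (A : Aux V lam b) {m : ℝ} (hm : m ∈ Ioc (0:ℝ) b) :
    ∫ s in Ioc (0:ℝ) m, psi V lam b s = hlamF V b lam m := by
  have hU : (⋃ n : ℕ, Ioc (m/(n+2)) m) = Ioc (0:ℝ) m := by
    ext x
    simp only [mem_iUnion, mem_Ioc]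
    constructor
    · rintro ⟨n, h1, h2⟩
      exact ⟨lt_trans (seq_mem m hm.1 n).1 h1, h2⟩
    · rintro ⟨hx0, hxm⟩
      obtain ⟨n, hn⟩ := exists_nat_gt (m / x)
      refine ⟨n, ?_, hxm⟩
      rw [div_lt_iff₀ (by positivity)]
      have h2 := (div_lt_iff₀ hx0).1 hn
      nlinarith
  have h1 : Tendsto (fun n : ℕ => ∫ s in Ioc (m/(n+2)) m, psi V lam b s) atTop
      (𝓝 (∫ s in Ioc (0:ℝ) m, psi V lam b s)) := by
    have := tendsto_setIntegral_of_monotone (f := psi V lam b) (μ := volume)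
      (s := fun n : ℕ => Ioc (m/(n+2)) m) (fun n => measurableSet_Ioc) ?_ ?_
    · rwa [hU] at this
    · intro i j hij
      apply Ioc_subset_Ioc_left
      apply div_le_div_of_nonneg_left hm.1.le (by positivity)
      have : (i:ℝ) ≤ (j:ℝ) := by exact_mod_cast hij
      linarith
    · rw [hU]
      exact A.psi_integrableOn hm
  have h2 : Tendsto (fun n : ℕ => ∫ s in Ioc (m/(n+2)) m, psi V lam b s) atTop
      (𝓝 (hlamF V b lam m - 0)) := by
    apply Tendsto.congr _ (tendsto_const_nhds.sub (A.h_tendsto.comp (tendsto_seq_zero m hm.1)))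
    intro n
    rw [← intervalIntegral.integral_of_le (seq_mem m hm.1 n).2,
      A.ftc (seq_mem m hm.1 n).1 (seq_mem m hm.1 n).2 hm.2]
    rfl
  have := tendsto_nhds_unique h1 h2
  rwa [sub_zero] at this

lemma Aux.weighted_integrableOn (A : Aux V lam b) {f : ℝ → ℝ}
    (hf : ContinuousOn f (Ioc 0 b)) {C m : ℝ} (hm : m ∈ Ioc (0:ℝ) b)
    (hC : ∀ s ∈ Ioc (0:ℝ) m, |f s| ≤ C) :
    IntegrableOn (fun s => f s * psi V lam b s) (Ioc 0 m) volume := by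
  have hsub : Ioc (0:ℝ) m ⊆ Ioc 0 b := Ioc_subset_Ioc_right hm.2
  have hsub1 : Ioc (0:ℝ) m ⊆ Ioc 0 1 := fun x hx => ⟨hx.1, hx.2.trans (hm.2.trans A.hb1)⟩
  apply Integrable.mono ((A.psi_integrableOn hm).const_mul C)
  · exact (((hf.mono hsub).mul (A.psi_contOn.mono hsub1)).aestronglyMeasurable measurableSet_Ioc)
  · apply ae_restrict_of_forall_mem measurableSet_Ioc
    intro s hs
    have h0 := A.psi_nonneg (hsub1 hs)
    rw [Real.norm_eq_abs, Real.norm_eq_abs, abs_mul, abs_mul, abs_of_nonneg h0]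
    exact mul_le_mul_of_nonneg_right (le_trans (hC s hs) (le_abs_self C)) h0

lemma Aux.weighted_bound (A : Aux V lam b) {f : ℝ → ℝ}
    (hf : ContinuousOn f (Ioc 0 b)) {C m : ℝ} (hm : m ∈ Ioc (0:ℝ) b)
    (hC : ∀ s ∈ Ioc (0:ℝ) m, |f s| ≤ C) :
    |∫ s in Ioc (0:ℝ) m, f s * psi V lam b s| ≤ C * hlamF V b lam m := by
  have hsub1 : Ioc (0:ℝ) m ⊆ Ioc 0 1 := fun x hx => ⟨hx.1, hx.2.trans (hm.2.trans A.hb1)⟩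
  have h1 : |∫ s in Ioc (0:ℝ) m, f s * psi V lam b s|
      ≤ ∫ s in Ioc (0:ℝ) m, |f s * psi V lam b s| := by
    simpa only [Real.norm_eq_abs] using MeasureTheory.norm_integral_le_integral_norm
      (μ := volume.restrict (Ioc (0:ℝ) m)) (fun s => f s * psi V lam b s)
  refine h1.trans ?_
  have h2 : ∫ s in Ioc (0:ℝ) m, |f s * psi V lam b s|
      ≤ ∫ s in Ioc (0:ℝ) m, C * psi V lam b s := by
    apply setIntegral_mono_on (A.weighted_integrableOn hf hm hC).abs
      ((A.psi_integrableOn hm).const_mul C) measurableSet_Ioc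
    intro s hs
    have h0 := A.psi_nonneg (hsub1 hs)
    rw [abs_mul, abs_of_nonneg h0]
    exact mul_le_mul_of_nonneg_right (hC s hs) h0
  refine h2.trans ?_
  rw [MeasureTheory.integral_const_mul, A.psi_setIntegral hm]

end Stmt7

open Stmt7 Set MeasureTheory Filter intervalIntegral Topology in
theorem stmt_7
    (V : ℝ → ℝ)
    (hV : ContDiffOn ℝ 1 V (Set.Icc 0 1))
    (hV0 : V 0 = 0)
    (hVpos : ∀ m ∈ Set.Ioc (0:ℝ) 1, 0 < V m)
    (hVdiv : ∀ m ∈ Set.Ioc (0:ℝ) 1,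
      ¬ IntervalIntegrable (fun s => (V s)⁻¹) MeasureTheory.volume 0 m)
    (g ginv : ℝ → ℝ)
    (hgcont : ContinuousOn g (Set.Icc 0 1))
    (hgC1 : ContDiffOn ℝ 1 g (Set.Ico 0 1))
    (hgmono : StrictMonoOn g (Set.Icc 0 1))
    (hglt : ∀ m ∈ Set.Ioo (0:ℝ) 1, g m < m)
    (hgmaps : Set.MapsTo g (Set.Icc 0 1) (Set.Icc 0 1))
    (hg0 : g 0 = 0)
    (hginvg : ∀ m ∈ Set.Icc (0:ℝ) 1, ginv (g m) = m)
    (hgginv : ∀ x ∈ Set.Icc (0:ℝ) (g 1), g (ginv x) = x)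
    (hginvext : ∀ x : ℝ, g 1 < x → ginv x = 1)
    (w : ℝ → ℝ) (hw : ContinuousOn w (Set.Icc 0 (g 1)))
    (lam : ℝ) (hlam : 0 < lam) :
    (∃ M : ℝ, ∀ m ∈ Set.Icc (0:ℝ) (g 1), |uF V (g 1) lam w m| ≤ M) ∧
    ContDiffOn ℝ 1 (uF V (g 1) lam w) (Set.Ioc 0 (g 1)) ∧
    (∀ m ∈ Set.Ioc (0:ℝ) (g 1),
      uF V (g 1) lam w m +
        lam * V m * derivWithin (uF V (g 1) lam w) (Set.Ioc 0 (g 1)) m = w m) ∧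
    uF V (g 1) lam w 0 = w 0 ∧
    (∀ v : ℝ → ℝ,
      (∃ M : ℝ, ∀ m ∈ Set.Icc (0:ℝ) (g 1), |v m| ≤ M) →
      ContDiffOn ℝ 1 v (Set.Ioc 0 (g 1)) →
      (∀ m ∈ Set.Ioc (0:ℝ) (g 1),
        v m + lam * V m * derivWithin v (Set.Ioc 0 (g 1)) m = w m) →
      v 0 = w 0 →
      ∀ m ∈ Set.Icc (0:ℝ) (g 1), v m = uF V (g 1) lam w m) ∧
    ContinuousOn (uF V (g 1) lam w) (Set.Icc 0 (g 1)) ∧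
    (∀ m ∈ Set.Icc (0:ℝ) (g 1),
      |uF V (g 1) lam w m| ≤ sSup ((fun x => |w x|) '' Set.Icc 0 (g 1))) := by
  classical
  set b := g 1 with hbdef
  have hb : 0 < b := by
    have := hgmono (left_mem_Icc.2 zero_le_one) (right_mem_Icc.2 zero_le_one) zero_lt_one
    rwa [hg0] at this
  have hb1 : b ≤ 1 := (hgmaps (right_mem_Icc.2 zero_le_one)).2
  have A : Stmt7.Aux V lam b := ⟨hlam, hb, hb1, hV.continuousOn, hVpos, hVdiv b ⟨hb, hb1⟩⟩
  have hwc : ContinuousOn w (Icc 0 b) := hw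
  set C := sSup ((fun x => |w x|) '' Icc (0:ℝ) b) with hCdef
  have hC : ∀ x ∈ Icc (0:ℝ) b, |w x| ≤ C := by
    intro x hx
    apply le_csSup
    · exact (isCompact_Icc.image_of_continuousOn hwc.abs).bddAbove
    · exact mem_image_of_mem _ hx
  have hC0 : 0 ≤ C := le_trans (abs_nonneg _) (hC 0 ⟨le_refl 0, hb.le⟩)
  -- integrand identity
  have integrand_eq : (fun s => w s * hlamF V b lam s / (lam * V s))
      = fun s => w s * Stmt7.psi V lam b s := by
    funext s
    rcases eq_or_ne s 0 with rfl | hs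
    · simp [hlamF, Stmt7.psi, Stmt7.phi, hV0]
    · rw [Stmt7.psi_eq hs, Stmt7.phi, div_eq_mul_inv, mul_assoc]
  set G := fun x : ℝ => ∫ s in (0:ℝ)..x, w s * Stmt7.psi V lam b s with hGdef
  have huF : ∀ m : ℝ, m ≠ 0 → uF V b lam w m = (hlamF V b lam m)⁻¹ * G m := by
    intro m hm
    rw [uF, if_neg hm, hGdef]
    congr 1
    rw [integrand_eq]
  have hu0 : uF V b lam w 0 = w 0 := by rw [uF, if_pos rfl]
  have hGset : ∀ m ∈ Ioc (0:ℝ) b, G m = ∫ s in Ioc (0:ℝ) m, w s * Stmt7.psi V lam b s := by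
    intro m hm
    rw [hGdef]
    exact intervalIntegral.integral_of_le hm.1.le
  have hwIoc : ContinuousOn w (Ioc 0 b) := hwc.mono Ioc_subset_Icc_self
  have hGbound : ∀ m ∈ Ioc (0:ℝ) b, |G m| ≤ C * hlamF V b lam m := by
    intro m hm
    rw [hGset m hm]
    exact A.weighted_bound hwIoc hm (fun s hs => hC s ⟨hs.1.le, hs.2.trans hm.2⟩)
  have hGint : ∀ m ∈ Ioc (0:ℝ) b,
      IntegrableOn (fun s => w s * Stmt7.psi V lam b s) (Ioc 0 m) volume :=
    fun m hm => A.weighted_integrableOn hwIoc hm (fun s hs => hC s ⟨hs.1.le, hs.2.trans hm.2⟩)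
  have hubound : ∀ m ∈ Icc (0:ℝ) b, |uF V b lam w m| ≤ C := by
    intro m hm
    rcases eq_or_ne m 0 with rfl | hne
    · rw [hu0]
      exact hC 0 ⟨le_refl 0, hb.le⟩
    · have hm' : m ∈ Ioc (0:ℝ) b := ⟨lt_of_le_of_ne hm.1 (Ne.symm hne), hm.2⟩
      have hpos := Stmt7.h_pos (V := V) (b := b) (lam := lam) hne
      rw [huF m hne, abs_mul, abs_of_nonneg (inv_nonneg.2 hpos.le)]
      calc (hlamF V b lam m)⁻¹ * |G m| ≤ (hlamF V b lam m)⁻¹ * (C * hlamF V b lam m) :=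
            mul_le_mul_of_nonneg_left (hGbound m hm') (inv_nonneg.2 hpos.le)
        _ = C := by field_simp
  have hchiII : ∀ x ∈ Icc (0:ℝ) b,
      IntervalIntegrable (fun s => w s * Stmt7.psi V lam b s) volume 0 x := by
    intro x hx
    rcases eq_or_lt_of_le hx.1 with h | h
    · cases h
      exact IntervalIntegrable.refl
    · rw [intervalIntegrable_iff_integrableOn_Ioc_of_le hx.1]
      exact hGint x ⟨h, hx.2⟩
  have hchiC : ContinuousOn (fun s => w s * Stmt7.psi V lam b s) (Ioc 0 b) :=
    hwIoc.mul (A.psi_contOn.mono (fun y hy => ⟨hy.1, hy.2.trans hb1⟩))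
  -- derivative of G
  have hGderiv : ∀ m ∈ Ioc (0:ℝ) b,
      HasDerivWithinAt G (w m * Stmt7.psi V lam b m) (Ioc 0 b) m := by
    intro m hm
    have hε : 0 < m / 2 := half_pos hm.1
    have hεm : m / 2 < m := half_lt_self hm.1
    have hii : IntervalIntegrable (fun s => w s * Stmt7.psi V lam b s) volume (m/2) m := by
      apply (hchiC.mono ?_).intervalIntegrable
      rw [uIcc_of_le hεm.le]
      exact fun y hy => ⟨lt_of_lt_of_le hε hy.1, hy.2.trans hm.2⟩
    have hK : HasDerivWithinAt (fun x => ∫ s in (m/2)..x, w s * Stmt7.psi V lam b s)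
        (w m * Stmt7.psi V lam b m) (Ioc 0 b) m := by
      rcases lt_or_eq_of_le hm.2 with hlt | heq
      · have hnb : Ioc (0:ℝ) b ∈ 𝓝 m :=
          mem_of_superset (Ioo_mem_nhds hm.1 hlt) Ioo_subset_Ioc_self
        exact (intervalIntegral.integral_hasDerivAt_right hii
          ⟨Ioc 0 b, hnb, hchiC.aestronglyMeasurable measurableSet_Ioc⟩
          (hchiC.continuousAt hnb)).hasDerivWithinAt
      · have hmem : Ioc (0:ℝ) b ∈ 𝓝[Iic m] m := by
          rw [mem_nhdsWithin]
          exact ⟨Ioi 0, isOpen_Ioi, hm.1, fun y hy => ⟨hy.1, hy.2.trans_eq heq⟩⟩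
        have hcw : ContinuousWithinAt (fun s => w s * Stmt7.psi V lam b s) (Iic m) m :=
          (hchiC m hm).mono_of_mem_nhdsWithin hmem
        have h1 : HasDerivWithinAt (fun x => ∫ s in (m/2)..x, w s * Stmt7.psi V lam b s)
            (w m * Stmt7.psi V lam b m) (Iic m) m :=
          intervalIntegral.integral_hasDerivWithinAt_right (s := Iic m) (t := Iic m) hii
            ⟨Ioc 0 b, hmem, hchiC.aestronglyMeasurable measurableSet_Ioc⟩ hcw
        exact h1.mono (fun y hy => le_of_le_of_eq hy.2 heq.symm)
    have hGeq : ∀ x ∈ Ioc (m/2) b,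
        G x = G (m/2) + ∫ s in (m/2)..x, w s * Stmt7.psi V lam b s := by
      intro x hx
      have h2 : IntervalIntegrable (fun s => w s * Stmt7.psi V lam b s) volume (m/2) x := by
        apply (hchiC.mono ?_).intervalIntegrable
        rw [uIcc_of_le hx.1.le]
        exact fun y hy => ⟨lt_of_lt_of_le hε hy.1, hy.2.trans hx.2⟩
      rw [hGdef]
      exact (intervalIntegral.integral_add_adjacent_intervals
        (hchiII (m/2) ⟨hε.le, hεm.le.trans hm.2⟩) h2).symm
    apply HasDerivWithinAt.congr_of_eventuallyEq (hK.const_add (G (m/2)))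
    · apply eventually_of_mem (mem_nhdsWithin.2
        ⟨Ioi (m/2), isOpen_Ioi, hεm, fun y hy => (⟨hy.1, hy.2.2⟩ : y ∈ Ioc (m/2) b)⟩)
      intro y hy
      exact hGeq y hy
    · exact hGeq m ⟨hεm, hm.2⟩
  -- derivative of uF
  have huderiv : ∀ m ∈ Ioc (0:ℝ) b, HasDerivWithinAt (uF V b lam w)
      (Stmt7.phi V lam m * (w m - uF V b lam w m)) (Ioc 0 b) m := by
    intro m hm
    have hm1 : m ∈ Ioc (0:ℝ) 1 := ⟨hm.1, hm.2.trans hb1⟩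
    have hFd : HasDerivWithinAt (Stmt7.Fi V lam b) (Stmt7.phi V lam m) (Ioc 0 b) m := by
      rcases lt_or_eq_of_le hm1.2 with hlt | heq
      · exact (A.Fi_hasDerivAt ⟨hm.1, hlt⟩).hasDerivWithinAt
      · exact (A.Fi_hasDerivWithinAt hm1).mono
          (fun y hy => le_of_le_of_eq (hy.2.trans hb1) heq.symm)
    have hE : HasDerivWithinAt (fun x => Real.exp (-(Stmt7.Fi V lam b x)))
        (Real.exp (-(Stmt7.Fi V lam b m)) * (-(Stmt7.phi V lam m))) (Ioc 0 b) m := hFd.neg.exp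
    have hprod := hE.mul (hGderiv m hm)
    have hval : ∀ x ∈ Ioc (0:ℝ) b, uF V b lam w x = Real.exp (-(Stmt7.Fi V lam b x)) * G x := by
      intro x hx
      rw [huF x (ne_of_gt hx.1), Stmt7.h_eq (ne_of_gt hx.1), Real.exp_neg]
    have hfinal := hprod.congr hval (hval m hm)
    refine hfinal.congr_deriv ?_
    have hX : Real.exp (Stmt7.Fi V lam b m) ≠ 0 := (Real.exp_pos _).ne'
    rw [Stmt7.psi_eq (ne_of_gt hm.1), huF m (ne_of_gt hm.1), Stmt7.h_eq (ne_of_gt hm.1),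
      Real.exp_neg]
    field_simp
    ring
  have hUD : UniqueDiffOn ℝ (Ioc (0:ℝ) b) := uniqueDiffOn_Ioc 0 b
  have hdW : ∀ m ∈ Ioc (0:ℝ) b, derivWithin (uF V b lam w) (Ioc 0 b) m
      = Stmt7.phi V lam m * (w m - uF V b lam w m) :=
    fun m hm => (huderiv m hm).derivWithin (hUD m hm)
  have hode : ∀ m ∈ Ioc (0:ℝ) b,
      uF V b lam w m + lam * V m * derivWithin (uF V b lam w) (Ioc 0 b) m = w m := by
    intro m hm
    rw [hdW m hm, Stmt7.phi]
    have hne : lam * V m ≠ 0 := (mul_pos hlam (hVpos m ⟨hm.1, hm.2.trans hb1⟩)).ne'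
    field_simp
    rw [mul_div_cancel_left₀ _ (hVpos m ⟨hm.1, hm.2.trans hb1⟩).ne']
    ring
  have hdiffOn : DifferentiableOn ℝ (uF V b lam w) (Ioc 0 b) :=
    fun m hm => (huderiv m hm).differentiableWithinAt
  have hucont : ContinuousOn (uF V b lam w) (Ioc 0 b) := hdiffOn.continuousOn
  have hCD : ContDiffOn ℝ 1 (uF V b lam w) (Ioc 0 b) := by
    rw [show (1 : WithTop ℕ∞) = 0 + 1 from (zero_add 1).symm]
    rw [contDiffOn_succ_iff_derivWithin hUD]
    refine ⟨hdiffOn, by simp, ?_⟩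
    rw [contDiffOn_zero]
    apply ContinuousOn.congr ((A.phi_contOn.mono (fun y hy => ⟨hy.1, hy.2.trans hb1⟩)).mul
      (hwIoc.sub hucont))
    exact fun m hm => hdW m hm
  -- continuity at 0
  have htend0 : Tendsto (uF V b lam w) (𝓝[Ioc (0:ℝ) b] 0) (𝓝 (w 0)) := by
    rw [Metric.tendsto_nhdsWithin_nhds]
    intro ε hεpos
    have hw0 : ContinuousWithinAt w (Icc 0 b) 0 := hwc 0 ⟨le_refl 0, hb.le⟩
    obtain ⟨δ₁, hδ₁, hδ⟩ := Metric.continuousWithinAt_iff.1 hw0 (ε/2) (by positivity)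
    refine ⟨δ₁, hδ₁, ?_⟩
    intro x hx hdist
    have hx' : x ∈ Ioc (0:ℝ) b := hx
    have hxlt : x < δ₁ := by rwa [Real.dist_eq, sub_zero, abs_of_pos hx'.1] at hdist
    have hbd : ∀ s ∈ Ioc (0:ℝ) x, |w s - w 0| ≤ ε/2 := by
      intro s hs
      have hsI : s ∈ Icc (0:ℝ) b := ⟨hs.1.le, hs.2.trans hx'.2⟩
      have hds : dist s 0 < δ₁ := by
        rw [Real.dist_eq, sub_zero, abs_of_nonneg hs.1.le]
        exact lt_of_le_of_lt hs.2 hxlt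
      have := hδ hsI hds
      rw [Real.dist_eq] at this
      exact this.le
    have hint1 := hGint x hx'
    have hint2 : IntegrableOn (fun s => w 0 * Stmt7.psi V lam b s) (Ioc 0 x) volume :=
      (A.psi_integrableOn hx').const_mul (w 0)
    have hG2 : G x - w 0 * hlamF V b lam x
        = ∫ s in Ioc (0:ℝ) x, (w s - w 0) * Stmt7.psi V lam b s := by
      have hsplit : ∫ s in Ioc (0:ℝ) x, (w s - w 0) * Stmt7.psi V lam b s
          = (∫ s in Ioc (0:ℝ) x, w s * Stmt7.psi V lam b s)
            - ∫ s in Ioc (0:ℝ) x, w 0 * Stmt7.psi V lam b s := by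
        rw [← MeasureTheory.integral_sub hint1 hint2]
        congr 1
        funext s
        ring
      rw [hGset x hx', hsplit, MeasureTheory.integral_const_mul, A.psi_setIntegral hx']
    have hbound2 : |G x - w 0 * hlamF V b lam x| ≤ (ε/2) * hlamF V b lam x := by
      rw [hG2]
      exact A.weighted_bound (hwIoc.sub continuousOn_const) hx' hbd
    have hpos := Stmt7.h_pos (V := V) (b := b) (lam := lam) (ne_of_gt hx'.1)
    rw [Real.dist_eq, huF x (ne_of_gt hx'.1)]
    have hre : (hlamF V b lam x)⁻¹ * G x - w 0
        = (hlamF V b lam x)⁻¹ * (G x - w 0 * hlamF V b lam x) := by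
      field_simp
    rw [hre, abs_mul, abs_of_nonneg (inv_nonneg.2 hpos.le)]
    calc (hlamF V b lam x)⁻¹ * |G x - w 0 * hlamF V b lam x|
        ≤ (hlamF V b lam x)⁻¹ * ((ε/2) * hlamF V b lam x) :=
          mul_le_mul_of_nonneg_left hbound2 (inv_nonneg.2 hpos.le)
      _ = ε/2 := by field_simp
      _ < ε := by linarith
  have hcontIcc : ContinuousOn (uF V b lam w) (Icc 0 b) := by
    intro m hm
    rcases eq_or_ne m 0 with rfl | hne
    · have hsub2 : Icc (0:ℝ) b ⊆ insert 0 (Ioc 0 b) := by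
        intro y hy
        rcases eq_or_lt_of_le hy.1 with h | h
        · exact mem_insert_iff.2 (Or.inl h.symm)
        · exact mem_insert_iff.2 (Or.inr ⟨h, hy.2⟩)
      have hcw : ContinuousWithinAt (uF V b lam w) (insert 0 (Ioc 0 b)) 0 := by
        rw [ContinuousWithinAt, nhdsWithin_insert, hu0, tendsto_sup]
        exact ⟨hu0 ▸ tendsto_pure_nhds (uF V b lam w) 0, htend0⟩
      exact hcw.mono hsub2
    · have hm' : m ∈ Ioc (0:ℝ) b := ⟨lt_of_le_of_ne hm.1 (Ne.symm hne), hm.2⟩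
      exact (hucont m hm').mono_of_mem_nhdsWithin (mem_nhdsWithin.2
        ⟨Ioi 0, isOpen_Ioi, hm'.1, fun y hy => ⟨hy.1, hy.2.2⟩⟩)
  -- uniqueness
  have huniq : ∀ v : ℝ → ℝ,
      (∃ M : ℝ, ∀ m ∈ Icc (0:ℝ) b, |v m| ≤ M) →
      ContDiffOn ℝ 1 v (Ioc 0 b) →
      (∀ m ∈ Ioc (0:ℝ) b, v m + lam * V m * derivWithin v (Ioc 0 b) m = w m) →
      v 0 = w 0 →
      ∀ m ∈ Icc (0:ℝ) b, v m = uF V b lam w m := by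
    rintro v ⟨M, hM⟩ hvC1 hvode hv0
    have hvdiff : DifferentiableOn ℝ v (Ioc 0 b) := hvC1.differentiableOn one_ne_zero
    set D := fun x => hlamF V b lam x * v x - G x with hDdef
    have hDderiv : ∀ m ∈ Ioc (0:ℝ) b, HasDerivWithinAt D 0 (Ioc 0 b) m := by
      intro m hm
      have hm1 : m ∈ Ioc (0:ℝ) 1 := ⟨hm.1, hm.2.trans hb1⟩
      have hhd : HasDerivWithinAt (hlamF V b lam) (Stmt7.psi V lam b m) (Ioc 0 b) m := by
        rcases lt_or_eq_of_le hm1.2 with hlt | heq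
        · exact (A.h_hasDerivAt ⟨hm.1, hlt⟩).hasDerivWithinAt
        · exact (A.h_hasDerivWithinAt hm1).mono
            (fun y hy => le_of_le_of_eq (hy.2.trans hb1) heq.symm)
      have hvd := (hvdiff m hm).hasDerivWithinAt
      have hd := (hhd.mul hvd).sub (hGderiv m hm)
      refine hd.congr_deriv ?_
      have hne : lam * V m ≠ 0 := (mul_pos hlam (hVpos m hm1)).ne'
      have hv' : derivWithin v (Ioc 0 b) m = (w m - v m) * (lam * V m)⁻¹ := by
        have h3 := hvode m hm
        field_simp
        rw [eq_div_iff (hVpos m hm1).ne']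
        linarith
      rw [hv', Stmt7.psi_eq (ne_of_gt hm.1), Stmt7.phi]
      field_simp
      ring
    have hDdiff : DifferentiableOn ℝ D (Ioc 0 b) :=
      fun m hm => (hDderiv m hm).differentiableWithinAt
    have hDconst : ∀ x ∈ Ioc (0:ℝ) b, ∀ y ∈ Ioc (0:ℝ) b, D x = D y := by
      intro x hx y hy
      have hle := Convex.norm_image_sub_le_of_norm_derivWithin_le (C := 0) hDdiff
        (fun z hz => by simp [(hDderiv z hz).derivWithin (hUD z hz)]) (convex_Ioc 0 b) hx hy
      have h0 : ‖D y - D x‖ ≤ 0 := by simpa using hle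
      have h1 : D y - D x = 0 := norm_le_zero_iff.1 h0
      exact (sub_eq_zero.1 h1).symm
    have hxmem : ∀ n : ℕ, b / (n+2) ∈ Ioc (0:ℝ) b := Stmt7.seq_mem b hb
    have hhx : Tendsto (fun n : ℕ => hlamF V b lam (b / (n+2))) atTop (𝓝 0) :=
      A.h_tendsto.comp (Stmt7.tendsto_seq_zero b hb)
    have hterm1 : Tendsto (fun n : ℕ => hlamF V b lam (b/(n+2)) * v (b/(n+2))) atTop (𝓝 0) := by
      apply squeeze_zero_norm (a := fun n : ℕ => M * hlamF V b lam (b/(n+2)))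
        ?_ (by simpa using hhx.const_mul M)
      intro n
      rw [Real.norm_eq_abs, abs_mul, abs_of_nonneg (Stmt7.h_nonneg _)]
      exact le_trans (mul_le_mul_of_nonneg_left (hM _ (Ioc_subset_Icc_self (hxmem n)))
        (Stmt7.h_nonneg _)) (le_of_eq (mul_comm _ _))
    have hterm2 : Tendsto (fun n : ℕ => G (b/(n+2))) atTop (𝓝 0) := by
      apply squeeze_zero_norm (a := fun n : ℕ => C * hlamF V b lam (b/(n+2)))
        ?_ (by simpa using hhx.const_mul C)
      intro n
      rw [Real.norm_eq_abs]
      exact hGbound _ (hxmem n)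
    have hDlim : Tendsto (fun n : ℕ => D (b/(n+2))) atTop (𝓝 0) := by
      simpa using hterm1.sub hterm2
    have hDzero : ∀ m ∈ Ioc (0:ℝ) b, D m = 0 := by
      intro m hm
      have hconst : (fun n : ℕ => D (b/(n+2))) = fun _ : ℕ => D m :=
        funext fun n => hDconst _ (hxmem n) _ hm
      rw [hconst] at hDlim
      exact tendsto_nhds_unique tendsto_const_nhds hDlim
    intro m hm
    rcases eq_or_ne m 0 with rfl | hne
    · rw [hv0, hu0]
    · have hm' : m ∈ Ioc (0:ℝ) b := ⟨lt_of_le_of_ne hm.1 (Ne.symm hne), hm.2⟩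
      have hz := hDzero m hm'
      have hzz : hlamF V b lam m * v m = G m := by
        have : hlamF V b lam m * v m - G m = 0 := hz
        linarith
      have hpos := Stmt7.h_pos (V := V) (b := b) (lam := lam) hne
      rw [huF m hne, ← hzz]
      field_simp
  exact ⟨⟨C, hubound⟩, hCD, hode, hu0, huniq, hcontIcc, hubound⟩
end

section
/- For every λ > 0, the function s ↦ h_λ(s)/(λ V(s)) is integrable on (0,g(1)) and ∫_0^{g(1)} h_λ(s)/(λ V(s)) ds = 1. -/
open MeasureTheory Set Filter Topology

theorem stmt_8
    (V : ℝ → ℝ)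
    (hV : ContDiffOn ℝ 1 V (Set.Icc 0 1))
    (hV0 : V 0 = 0)
    (hVpos : ∀ m ∈ Set.Ioc (0:ℝ) 1, 0 < V m)
    (hVdiv : ∀ m ∈ Set.Ioc (0:ℝ) 1,
      ¬ IntervalIntegrable (fun s => (V s)⁻¹) MeasureTheory.volume 0 m)
    (g ginv : ℝ → ℝ)
    (hgcont : ContinuousOn g (Set.Icc 0 1))
    (hgC1 : ContDiffOn ℝ 1 g (Set.Ico 0 1))
    (hgmono : StrictMonoOn g (Set.Icc 0 1))
    (hglt : ∀ m ∈ Set.Ioo (0:ℝ) 1, g m < m)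
    (hgmaps : Set.MapsTo g (Set.Icc 0 1) (Set.Icc 0 1))
    (hg0 : g 0 = 0)
    (hginvg : ∀ m ∈ Set.Icc (0:ℝ) 1, ginv (g m) = m)
    (hgginv : ∀ x ∈ Set.Icc (0:ℝ) (g 1), g (ginv x) = x)
    (hginvext : ∀ x : ℝ, g 1 < x → ginv x = 1)
    (lam : ℝ) (hlam : 0 < lam) :
    IntervalIntegrable (fun s => hlamF V (g 1) lam s / (lam * V s))
      MeasureTheory.volume 0 (g 1) ∧
    ∫ s in (0:ℝ)..(g 1), hlamF V (g 1) lam s / (lam * V s) = 1 := by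
  set b := g 1 with hbdef
  have hb0 : 0 < b := by
    have := hgmono (Set.left_mem_Icc.mpr zero_le_one) (Set.right_mem_Icc.mpr zero_le_one)
      zero_lt_one
    simpa [hg0] using this
  have hb1 : b ≤ 1 := (hgmaps (Set.right_mem_Icc.mpr zero_le_one)).2
  have hbmem : b ∈ Set.Ioc (0:ℝ) 1 := ⟨hb0, hb1⟩
  set c : ℝ → ℝ := fun s => (lam * V s)⁻¹ with hcdef
  have hVc : ContinuousOn V (Set.Icc 0 1) := hV.continuousOn
  have hcpos : ∀ s ∈ Set.Ioc (0:ℝ) 1, 0 < c s := fun s hs =>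
    inv_pos.mpr (mul_pos hlam (hVpos s hs))
  have hccont : ContinuousOn c (Set.Ioc 0 1) := by
    apply ContinuousOn.inv₀
    · exact continuousOn_const.mul (hVc.mono Set.Ioc_subset_Icc_self)
    · intro s hs; exact (mul_pos hlam (hVpos s hs)).ne'
  have hcint : ∀ u ∈ Set.Ioc (0:ℝ) 1, ∀ v ∈ Set.Ioc (0:ℝ) 1,
      IntervalIntegrable c volume u v := by
    intro u hu v hv
    exact (hccont.mono (Set.ordConnected_Ioc.uIcc_subset hu hv)).intervalIntegrable
  set G : ℝ → ℝ := fun m => ∫ s in b..m, c s with hGdef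
  set F : ℝ → ℝ := fun m => Real.exp (G m) with hFdef
  have hFb : F b = 1 := by simp [hFdef, hGdef]
  have hFeq : ∀ m : ℝ, m ≠ 0 → hlamF V b lam m = F m := fun m hm => by
    simp [hlamF, hm, hFdef, hGdef, hcdef]
  have hfeq : ∀ x : ℝ, x ≠ 0 →
      hlamF V b lam x / (lam * V x) = F x * c x := by
    intro x hx
    rw [hFeq x hx, div_eq_mul_inv]
  have hGderiv : ∀ m ∈ Set.Ioo (0:ℝ) b, HasDerivAt G (c m) m := by
    intro m hm
    have hm1 : m ∈ Set.Ioo (0:ℝ) 1 := ⟨hm.1, lt_of_lt_of_le hm.2 hb1⟩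
    refine intervalIntegral.integral_hasDerivAt_right
      (hcint b hbmem m ⟨hm.1, hm1.2.le⟩) ?_ ?_
    · exact (hccont.mono Set.Ioo_subset_Ioc_self).stronglyMeasurableAtFilter isOpen_Ioo m hm1
    · exact (hccont.mono Set.Ioo_subset_Ioc_self).continuousAt (Ioo_mem_nhds hm1.1 hm1.2)
  have hsub : ∀ ε ∈ Set.Ioc (0:ℝ) b, Set.Icc ε b ⊆ Set.Ioc 0 1 := by
    intro ε hε x hx
    exact ⟨lt_of_lt_of_le hε.1 hx.1, hx.2.trans hb1⟩
  have hGcont : ∀ ε ∈ Set.Ioc (0:ℝ) b, ContinuousOn G (Set.Icc ε b) := by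
    intro ε hε
    have h1 : IntegrableOn c (Set.uIcc ε b) volume := by
      rw [Set.uIcc_of_le hε.2]
      exact ((hccont.mono (hsub ε hε)).integrableOn_compact isCompact_Icc)
    have h2 := (intervalIntegral.continuousOn_primitive_interval_left h1).neg
    rw [Set.uIcc_of_le hε.2] at h2
    refine h2.congr fun m hm => ?_
    simp only [hGdef]
    exact intervalIntegral.integral_symm m b
  have hFccont : ∀ ε ∈ Set.Ioc (0:ℝ) b,
      ContinuousOn (fun s : ℝ => F s * c s) (Set.Icc ε b) := by
    intro ε hε
    exact (Real.continuous_exp.comp_continuousOn (hGcont ε hε)).mul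
      (hccont.mono (hsub ε hε))
  have hFTC : ∀ ε ∈ Set.Ioc (0:ℝ) b, ∫ s in ε..b, F s * c s = 1 - F ε := by
    intro ε hε
    have hεb : ε ≤ b := hε.2
    have hFcont : ContinuousOn F (Set.Icc ε b) :=
      Real.continuous_exp.comp_continuousOn (hGcont ε hε)
    have hint : IntervalIntegrable (fun s => F s * c s) volume ε b := by
      apply ContinuousOn.intervalIntegrable
      rw [Set.uIcc_of_le hεb]
      exact hFccont ε hε
    have hderiv : ∀ x ∈ Set.Ioo ε b, HasDerivWithinAt F (F x * c x) (Set.Ioi x) x := by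
      intro x hx
      exact ((hGderiv x ⟨lt_of_lt_of_le hε.1 hx.1.le, hx.2⟩).exp).hasDerivWithinAt
    rw [intervalIntegral.integral_eq_sub_of_hasDeriv_right_of_le hεb hFcont hderiv hint, hFb]
  -- the approximating sequence
  set a : ℕ → ℝ := fun n => b / (n + 2) with hadef
  have hamem : ∀ n, a n ∈ Set.Ioc (0:ℝ) b := by
    intro n
    constructor
    · positivity
    · apply div_le_self hb0.le
      have : (0:ℝ) ≤ (n:ℝ) := Nat.cast_nonneg n
      linarith
  have hamem1 : ∀ n, a n ∈ Set.Ioc (0:ℝ) 1 := fun n => ⟨(hamem n).1, (hamem n).2.trans hb1⟩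
  have haten : Tendsto a atTop (𝓝 0) := by
    have h1 : Tendsto (fun n : ℕ => (n:ℝ) + 2) atTop atTop := by
      apply tendsto_atTop_add_const_right
      exact tendsto_natCast_atTop_atTop
    have h2 : Tendsto (fun n : ℕ => ((n:ℝ) + 2)⁻¹) atTop (𝓝 0) := h1.inv_tendsto_atTop
    have h3 := h2.const_mul b
    simpa [hadef, div_eq_mul_inv] using h3
  have hanti : ∀ n m : ℕ, n ≤ m → a m ≤ a n := by
    intro n m hnm
    apply div_le_div_of_nonneg_left hb0.le (by positivity)
    have : (n:ℝ) ≤ (m:ℝ) := Nat.cast_le.mpr hnm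
    linarith
  have hcIoc : ∀ n, IntegrableOn c (Set.Ioc (a n) b) volume :=
    fun n => (hcint (a n) (hamem1 n) b hbmem).1
  have hInorm : ∀ n, ∫ x in Set.Ioc (a n) b, ‖c x‖ = ∫ s in (a n)..b, c s := by
    intro n
    rw [intervalIntegral.integral_of_le (hamem n).2]
    apply setIntegral_congr_fun measurableSet_Ioc
    intro x hx
    have hx1 : x ∈ Set.Ioc (0:ℝ) 1 := ⟨(hamem n).1.trans hx.1, hx.2.trans hb1⟩
    exact (Real.norm_eq_abs _).trans (abs_of_pos (hcpos x hx1))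
  have hImono : Monotone fun n => ∫ s in (a n)..b, c s := by
    intro n m hnm
    have hsplit : (∫ s in (a m)..(a n), c s) + ∫ s in (a n)..b, c s
        = ∫ s in (a m)..b, c s :=
      intervalIntegral.integral_add_adjacent_intervals
        (hcint (a m) (hamem1 m) (a n) (hamem1 n)) (hcint (a n) (hamem1 n) b hbmem)
    have hnn : 0 ≤ ∫ s in (a m)..(a n), c s := by
      apply intervalIntegral.integral_nonneg (hanti n m hnm)
      intro x hx
      exact (hcpos x ⟨(hamem m).1.trans_le hx.1, hx.2.trans ((hamem n).2.trans hb1)⟩).le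
    linarith
  have hnotbdd : ¬ BddAbove (Set.range fun n => ∫ s in (a n)..b, c s) := by
    rintro ⟨M, hM⟩
    have hcInt : IntegrableOn c (Set.Ioc 0 b) volume := by
      apply integrableOn_Ioc_of_intervalIntegral_norm_bounded_left (I := M) hcIoc haten
      filter_upwards with n
      rw [hInorm n]
      exact hM (Set.mem_range_self n)
    have hVi : IntegrableOn (fun s => (V s)⁻¹) (Set.Ioc 0 b) volume := by
      have h1 : IntegrableOn (fun x => lam * c x) (Set.Ioc 0 b) volume :=
        hcInt.const_mul lam
      refine h1.congr_fun ?_ measurableSet_Ioc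
      intro x _
      simp only [hcdef, mul_inv]
      rw [← mul_assoc, mul_inv_cancel₀ hlam.ne', one_mul]
    exact hVdiv b hbmem
      ((intervalIntegrable_iff_integrableOn_Ioc_of_le hb0.le).mpr hVi)
  have hItop : Tendsto (fun n => ∫ s in (a n)..b, c s) atTop atTop :=
    tendsto_atTop_atTop_of_monotone' hImono hnotbdd
  have hFa0 : Tendsto (fun n => F (a n)) atTop (𝓝 0) := by
    have h1 : Tendsto (fun n => -∫ s in (a n)..b, c s) atTop atBot :=
      tendsto_neg_atBot_iff.mpr hItop
    have h2 := Real.tendsto_exp_atBot.comp h1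
    refine h2.congr fun n => ?_
    simp only [Function.comp_apply, hFdef, hGdef]
    rw [intervalIntegral.integral_symm (a n) b]
  have hfiIoc : ∀ n, IntegrableOn (fun s => hlamF V b lam s / (lam * V s))
      (Set.Ioc (a n) b) volume := by
    intro n
    have h1 : IntegrableOn (fun s : ℝ => F s * c s) (Set.Ioc (a n) b) volume := by
      apply IntegrableOn.mono_set _ Set.Ioc_subset_Icc_self
      exact (hFccont (a n) (hamem n)).integrableOn_compact isCompact_Icc
    refine h1.congr_fun ?_ measurableSet_Ioc
    intro x hx
    exact (hfeq x ((hamem n).1.trans hx.1).ne').symm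
  have hfnormval : ∀ n, ∫ x in Set.Ioc (a n) b, ‖hlamF V b lam x / (lam * V x)‖
      = 1 - F (a n) := by
    intro n
    have h1 : ∫ x in Set.Ioc (a n) b, ‖hlamF V b lam x / (lam * V x)‖
        = ∫ x in Set.Ioc (a n) b, F x * c x := by
      apply setIntegral_congr_fun measurableSet_Ioc
      intro x hx
      have hx0 : (0:ℝ) < x := (hamem n).1.trans hx.1
      have hx1 : x ∈ Set.Ioc (0:ℝ) 1 := ⟨hx0, hx.2.trans hb1⟩
      dsimp only
      rw [Real.norm_eq_abs, hfeq x hx0.ne']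
      exact abs_of_nonneg (mul_nonneg (Real.exp_pos _).le (hcpos x hx1).le)
    rw [h1, ← intervalIntegral.integral_of_le (hamem n).2, hFTC (a n) (hamem n)]
  have hInt : IntegrableOn (fun s => hlamF V b lam s / (lam * V s)) (Set.Ioc 0 b) volume := by
    apply integrableOn_Ioc_of_intervalIntegral_norm_bounded_left (I := 1) hfiIoc haten
    filter_upwards with n
    rw [hfnormval n]
    have := (Real.exp_pos (G (a n))).le
    simp only [hFdef]
    linarith
  have hval : ∫ x in Set.Ioc (0:ℝ) b, hlamF V b lam x / (lam * V x) = 1 := by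
    have hcov : AECover (volume.restrict (Set.Ioc (0:ℝ) b)) atTop
        (fun n => Set.Ioc (a n) b) :=
      aecover_Ioc_of_Ioc haten tendsto_const_nhds
    have ht := hcov.integral_tendsto_of_countably_generated hInt
    have heq : ∀ n, ∫ x in Set.Ioc (a n) b, hlamF V b lam x / (lam * V x)
        ∂(volume.restrict (Set.Ioc (0:ℝ) b)) = 1 - F (a n) := by
      intro n
      rw [Measure.restrict_restrict measurableSet_Ioc,
        Set.inter_eq_self_of_subset_left (Set.Ioc_subset_Ioc_left (hamem n).1.le)]
      have h1 : ∫ x in Set.Ioc (a n) b, hlamF V b lam x / (lam * V x)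
          = ∫ x in Set.Ioc (a n) b, F x * c x := by
        apply setIntegral_congr_fun measurableSet_Ioc
        intro x hx
        exact hfeq x ((hamem n).1.trans hx.1).ne'
      rw [h1, ← intervalIntegral.integral_of_le (hamem n).2, hFTC (a n) (hamem n)]
    rw [show (∫ x in Set.Ioc (0:ℝ) b, hlamF V b lam x / (lam * V x))
        = ∫ x, hlamF V b lam x / (lam * V x) ∂(volume.restrict (Set.Ioc (0:ℝ) b)) from rfl]
    have ht2 : Tendsto (fun n => 1 - F (a n)) atTop
        (𝓝 (∫ x, hlamF V b lam x / (lam * V x) ∂(volume.restrict (Set.Ioc (0:ℝ) b)))) := by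
      refine ht.congr fun n => heq n
    have ht3 : Tendsto (fun n => 1 - F (a n)) atTop (𝓝 1) := by
      have := hFa0.const_sub 1
      simpa using this
    exact (tendsto_nhds_unique ht2 ht3)
  constructor
  · exact (intervalIntegrable_iff_integrableOn_Ioc_of_le hb0.le).mpr hInt
  · rw [intervalIntegral.integral_of_le hb0.le]
    exact hval
end

section
/- Assume hypothesis (H₁) (β satisfies |x₁β(m,x₁) − x₂β(m,x₂)| ≤ l|x₁−x₂| for some l ≥ 0) and assume there exists C ≥ 0 with ∫_m^{g⁻¹(m)} ds/V(s) ≤ C for all m ∈ (0,g(1)]. Set τ₀ = sup_{m ∈ (0,g(1)]} ∫_m^{g⁻¹(m)} ds/V(s), and assume τ_ > τ₀. Let φ be a continuous function on [0,τ̄] × [0,g(1)] and N^φ the continuous solution of the integral equation associated with φ. If there exists b ∈ (0, h⁻¹(e^{−τ_})) such that φ(t,m) = 0 for all m ∈ [0,b] and t ∈ [0,τ̄], then there exists t̄ ≥ 0 such that N^φ(t,m) = 0 for all m ∈ [0,g(1)] and all t ≥ t̄. -/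
noncomputable def piF (h hinv : ℝ → ℝ) (t m : ℝ) : ℝ :=
  hinv (h m * Real.exp (-t))

noncomputable def DeltaF (h hinv ginv : ℝ → ℝ) (s m : ℝ) : ℝ :=
  hinv (h (ginv m) * Real.exp (-s))

noncomputable def xiF (V γ h hinv : ℝ → ℝ) (m t : ℝ) : ℝ :=
  Real.exp (-∫ s in (0:ℝ)..t, (γ (piF h hinv s m) + deriv V (piF h hinv s m)))

noncomputable def KF (V δ h hinv : ℝ → ℝ) (t m : ℝ) : ℝ :=
  Real.exp (-∫ s in (0:ℝ)..t, (δ (piF h hinv s m) + deriv V (piF h hinv s m)))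

noncomputable def zetaF (V γ h hinv ginv : ℝ → ℝ) (k : ℝ → ℝ → ℝ) (m a : ℝ) : ℝ :=
  k m a * xiF V γ h hinv (ginv m) a

noncomputable def GFun (V δ γ h hinv ginv : ℝ → ℝ) (β k : ℝ → ℝ → ℝ) (τu τb : ℝ)
    (N : ℝ → ℝ → ℝ) (t m : ℝ) : ℝ :=
  2 * ∫ s in τb..t,
      (∫ a in τu..τb,
        zetaF V γ h hinv ginv k (piF h hinv (t - s) m) a *
          β (DeltaF h hinv ginv a (piF h hinv (t - s) m))
            (N (s - a) (DeltaF h hinv ginv a (piF h hinv (t - s) m))) *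
          N (s - a) (DeltaF h hinv ginv a (piF h hinv (t - s) m))) *
        KF V δ h hinv (t - s) m

noncomputable def JFun (V δ h hinv : ℝ → ℝ) (β : ℝ → ℝ → ℝ) (τb : ℝ)
    (N : ℝ → ℝ → ℝ) (t m : ℝ) : ℝ :=
  ∫ s in τb..t,
    KF V δ h hinv (t - s) m * β (piF h hinv (t - s) m) (N s (piF h hinv (t - s) m)) *
      N s (piF h hinv (t - s) m)

def IsSol (V δ γ h hinv g ginv : ℝ → ℝ) (β k : ℝ → ℝ → ℝ) (τu τb : ℝ)
    (φ N : ℝ → ℝ → ℝ) : Prop :=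
  ContinuousOn (fun q : ℝ × ℝ => N q.1 q.2) (Set.Ici 0 ×ˢ Set.Icc 0 (g 1)) ∧
  (∀ t ∈ Set.Icc (0:ℝ) τb, ∀ m ∈ Set.Icc (0:ℝ) (g 1), N t m = φ t m) ∧
  (∀ t : ℝ, τb ≤ t → ∀ m ∈ Set.Icc (0:ℝ) (g 1),
    N t m = φ τb (piF h hinv (t - τb) m) * KF V δ h hinv (t - τb) m +
      GFun V δ γ h hinv ginv β k τu τb N t m - JFun V δ h hinv β τb N t m)

set_option maxHeartbeats 1000000 in
theorem stmt_16
    (V : ℝ → ℝ)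
    (hV : ContDiffOn ℝ 1 V (Set.Icc 0 1))
    (hV0 : V 0 = 0)
    (hVpos : ∀ m ∈ Set.Ioc (0:ℝ) 1, 0 < V m)
    (hVdiv : ∀ m ∈ Set.Ioc (0:ℝ) 1,
      ¬ IntervalIntegrable (fun s => (V s)⁻¹) MeasureTheory.volume 0 m)
    (h hinv : ℝ → ℝ)
    (hHdef : ∀ m ∈ Set.Ioc (0:ℝ) 1, h m = Real.exp (-∫ s in m..1, (V s)⁻¹))
    (hH0 : h 0 = 0)
    (hHcont : ContinuousOn h (Set.Icc 0 1))
    (hHmono : StrictMonoOn h (Set.Icc 0 1))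
    (hHbij : Set.BijOn h (Set.Icc 0 1) (Set.Icc 0 1))
    (hinvH : ∀ m ∈ Set.Icc (0:ℝ) 1, hinv (h m) = m)
    (hHinv : ∀ x ∈ Set.Icc (0:ℝ) 1, h (hinv x) = x)
    (hinvMaps : Set.MapsTo hinv (Set.Icc 0 1) (Set.Icc 0 1))
    (g ginv : ℝ → ℝ)
    (hgcont : ContinuousOn g (Set.Icc 0 1))
    (hgC1 : ContDiffOn ℝ 1 g (Set.Ico 0 1))
    (hgmono : StrictMonoOn g (Set.Icc 0 1))
    (hglt : ∀ m ∈ Set.Ioo (0:ℝ) 1, g m < m)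
    (hgmaps : Set.MapsTo g (Set.Icc 0 1) (Set.Icc 0 1))
    (hg0 : g 0 = 0)
    (hginvg : ∀ m ∈ Set.Icc (0:ℝ) 1, ginv (g m) = m)
    (hgginv : ∀ x ∈ Set.Icc (0:ℝ) (g 1), g (ginv x) = x)
    (hginvext : ∀ x : ℝ, g 1 < x → ginv x = 1)
    (δ γ : ℝ → ℝ)
    (hδcont : ContinuousOn δ (Set.Icc 0 1))
    (hδpos : ∀ m ∈ Set.Icc (0:ℝ) 1, 0 ≤ δ m)
    (hγcont : ContinuousOn γ (Set.Icc 0 1))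
    (hγpos : ∀ m ∈ Set.Icc (0:ℝ) 1, 0 ≤ γ m)
    (β : ℝ → ℝ → ℝ)
    (hβcont : ContinuousOn (fun q : ℝ × ℝ => β q.1 q.2) (Set.Icc 0 (g 1) ×ˢ Set.univ))
    (hβpos : ∀ m ∈ Set.Icc (0:ℝ) (g 1), ∀ x : ℝ, 0 ≤ β m x)
    (τu τb : ℝ) (hτu : 0 < τu) (hτb : τu < τb)
    (k : ℝ → ℝ → ℝ)
    (hkcont : ContinuousOn (fun q : ℝ × ℝ => k q.1 q.2) (Set.Icc 0 1 ×ˢ Set.Icc τu τb))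
    (hkpos : ∀ m ∈ Set.Icc (0:ℝ) 1, ∀ a ∈ Set.Icc τu τb, 0 ≤ k m a)
    (hk0 : ∀ m : ℝ, g 1 ≤ m → ∀ a : ℝ, k m a = 0)
    (l : ℝ) (hl : 0 ≤ l)
    (hH1 : ∀ m ∈ Set.Icc (0:ℝ) (g 1), ∀ x₁ x₂ : ℝ, 0 ≤ x₁ → 0 ≤ x₂ →
      |x₁ * β m x₁ - x₂ * β m x₂| ≤ l * |x₁ - x₂|)
    (C : ℝ) (hC : 0 ≤ C)
    (hCbound : ∀ m ∈ Set.Ioc (0:ℝ) (g 1), ∫ s in m..(ginv m), (V s)⁻¹ ≤ C)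
    (τ0 : ℝ)
    (hτ0 : τ0 = sSup ((fun m => ∫ s in m..(ginv m), (V s)⁻¹) '' Set.Ioc 0 (g 1)))
    (hτuτ0 : τ0 < τu)
    (φ : ℝ → ℝ → ℝ)
    (hφ : ContinuousOn (fun q : ℝ × ℝ => φ q.1 q.2) (Set.Icc 0 τb ×ˢ Set.Icc 0 (g 1)))
    (N : ℝ → ℝ → ℝ)
    (hN : IsSol V δ γ h hinv g ginv β k τu τb φ N)
    (b : ℝ) (hb : b ∈ Set.Ioo 0 (hinv (Real.exp (-τu))))
    (hφ0 : ∀ t ∈ Set.Icc (0:ℝ) τb, ∀ m ∈ Set.Icc (0:ℝ) b, φ t m = 0) :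
    ∃ tbar : ℝ, 0 ≤ tbar ∧
      ∀ t : ℝ, tbar ≤ t → ∀ m ∈ Set.Icc (0:ℝ) (g 1), N t m = 0 := by
  classical
  have hτu0 : (0:ℝ) < τu := hτu
  have hτb0 : (0:ℝ) < τb := lt_trans hτu hτb
  have mem0 : (0:ℝ) ∈ Set.Icc (0:ℝ) 1 := ⟨le_rfl, zero_le_one⟩
  have mem1 : (1:ℝ) ∈ Set.Icc (0:ℝ) 1 := ⟨zero_le_one, le_rfl⟩
  have hg1pos : 0 < g 1 := by
    have h01 := hgmono mem0 mem1 zero_lt_one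
    rwa [hg0] at h01
  have hg1le : g 1 ≤ 1 := (hgmaps mem1).2
  have hg1mem : g 1 ∈ Set.Icc (0:ℝ) 1 := ⟨hg1pos.le, hg1le⟩
  have hIccsub : Set.Icc (0:ℝ) (g 1) ⊆ Set.Icc (0:ℝ) 1 := Set.Icc_subset_Icc le_rfl hg1le
  have hmemh : ∀ m ∈ Set.Icc (0:ℝ) 1, h m ∈ Set.Icc (0:ℝ) 1 := fun m hm => hHbij.mapsTo hm
  have le_of_h_le : ∀ x ∈ Set.Icc (0:ℝ) 1, ∀ y ∈ Set.Icc (0:ℝ) 1, h x ≤ h y → x ≤ y :=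
    fun x hx y hy hxy => (hHmono.le_iff_le hx hy).mp hxy
  have hVcont : ContinuousOn V (Set.Icc 0 1) := hV.continuousOn
  have hVinv_int : ∀ x y : ℝ, 0 < x → x ≤ y → y ≤ 1 →
      IntervalIntegrable (fun s => (V s)⁻¹) MeasureTheory.volume x y := by
    intro x y hx hxy hy1
    apply ContinuousOn.intervalIntegrable
    rw [Set.uIcc_of_le hxy]
    apply ContinuousOn.inv₀
    · exact hVcont.mono (Set.Icc_subset_Icc (by linarith) hy1)
    · intro s hs
      exact ne_of_gt (hVpos s ⟨lt_of_lt_of_le hx hs.1, le_trans hs.2 hy1⟩)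
  have hgle : ∀ y ∈ Set.Icc (0:ℝ) 1, g y ≤ y := by
    intro y hy
    rcases eq_or_lt_of_le hy.1 with he | h0y
    · rw [← he, hg0]
    rcases eq_or_lt_of_le hy.2 with he1 | hy1
    · rw [he1]; exact hg1le
    exact (hglt y ⟨h0y, hy1⟩).le
  have hginv_mem : ∀ x ∈ Set.Icc (0:ℝ) (g 1), ginv x ∈ Set.Icc (0:ℝ) 1 := by
    intro x hx
    have hsurj := intermediate_value_Icc zero_le_one hgcont
    rw [hg0] at hsurj
    obtain ⟨m0, hm0, hm0x⟩ := hsurj hx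
    rw [← hm0x, hginvg m0 hm0]
    exact hm0
  have hle_ginv : ∀ x ∈ Set.Icc (0:ℝ) (g 1), x ≤ ginv x := by
    intro x hx
    calc x = g (ginv x) := (hgginv x hx).symm
      _ ≤ ginv x := hgle _ (hginv_mem x hx)
  have hginv0 : ginv 0 = 0 := by
    have := hginvg 0 mem0
    rwa [hg0] at this
  have hginvg1 : ginv (g 1) = 1 := hginvg 1 mem1
  -- τ0 facts
  have hbddSτ : BddAbove ((fun m => ∫ s in m..(ginv m), (V s)⁻¹) '' Set.Ioc 0 (g 1)) := by
    refine ⟨C, ?_⟩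
    rintro x ⟨m, hm, rfl⟩
    exact hCbound m hm
  have hτ0_ge : ∀ m ∈ Set.Ioc (0:ℝ) (g 1), (∫ s in m..(ginv m), (V s)⁻¹) ≤ τ0 := by
    intro m hm
    rw [hτ0]
    exact le_csSup hbddSτ ⟨m, hm, rfl⟩
  have hτ0nn : 0 ≤ τ0 := by
    refine le_trans ?_ (hτ0_ge (g 1) ⟨hg1pos, le_rfl⟩)
    apply intervalIntegral.integral_nonneg (hle_ginv (g 1) ⟨hg1pos.le, le_rfl⟩)
    intro u hu
    have h0u : 0 < u := lt_of_lt_of_le hg1pos hu.1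
    have hu1 : u ≤ 1 := le_trans hu.2 (hginv_mem (g 1) ⟨hg1pos.le, le_rfl⟩).2
    exact inv_nonneg.mpr (hVpos u ⟨h0u, hu1⟩).le
  -- ratio lemma
  have hratio : ∀ x ∈ Set.Icc (0:ℝ) (g 1), h (ginv x) ≤ h x * Real.exp τ0 := by
    intro x hx
    rcases eq_or_lt_of_le hx.1 with he | hxpos
    · rw [← he, hginv0, hH0, zero_mul]
    · have hx1 : x ≤ 1 := le_trans hx.2 hg1le
      have hw : ginv x ∈ Set.Icc (0:ℝ) 1 := hginv_mem x hx
      have hxw : x ≤ ginv x := hle_ginv x hx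
      have hwpos : 0 < ginv x := lt_of_lt_of_le hxpos hxw
      have e1 : h x = Real.exp (-∫ s in x..1, (V s)⁻¹) := hHdef x ⟨hxpos, hx1⟩
      have e2 : h (ginv x) = Real.exp (-∫ s in (ginv x)..1, (V s)⁻¹) := hHdef (ginv x) ⟨hwpos, hw.2⟩
      have i1 : IntervalIntegrable (fun s => (V s)⁻¹) MeasureTheory.volume x (ginv x) :=
        hVinv_int x (ginv x) hxpos hxw hw.2
      have i2 : IntervalIntegrable (fun s => (V s)⁻¹) MeasureTheory.volume (ginv x) 1 :=
        hVinv_int (ginv x) 1 hwpos hw.2 le_rfl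
      have hadd := intervalIntegral.integral_add_adjacent_intervals i1 i2
      rw [e1, e2]
      have heq : (-∫ s in (ginv x)..1, (V s)⁻¹)
          = (-∫ s in x..1, (V s)⁻¹) + ∫ s in x..(ginv x), (V s)⁻¹ := by
        rw [← hadd]; ring
      rw [heq, Real.exp_add]
      exact mul_le_mul_of_nonneg_left (Real.exp_le_exp.mpr (hτ0_ge x ⟨hxpos, hx.2⟩))
        (Real.exp_nonneg _)
  -- b facts
  have hexpu_mem : Real.exp (-τu) ∈ Set.Icc (0:ℝ) 1 :=
    ⟨Real.exp_nonneg _, Real.exp_le_one_iff.mpr (by linarith)⟩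
  have hbmem : b ∈ Set.Icc (0:ℝ) 1 := ⟨hb.1.le, le_trans hb.2.le (hinvMaps hexpu_mem).2⟩
  have hb0pos : 0 < h b := by
    have := hHmono mem0 hbmem hb.1
    rwa [hH0] at this
  have hb0lt : h b < Real.exp (-τu) := by
    have := hHmono hbmem (hinvMaps hexpu_mem) hb.2
    rwa [hHinv _ hexpu_mem] at this
  have hhg1 : Real.exp (-τ0) ≤ h (g 1) := by
    rw [hHdef (g 1) ⟨hg1pos, hg1le⟩]
    apply Real.exp_le_exp.mpr
    rw [neg_le_neg_iff]
    have := hτ0_ge (g 1) ⟨hg1pos, le_rfl⟩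
    rwa [hginvg1] at this
  have hb0hg1 : h b < h (g 1) :=
    lt_of_lt_of_le (lt_trans hb0lt (Real.exp_lt_exp.mpr (by linarith))) hhg1
  have hg1hpos : 0 < h (g 1) := lt_trans hb0pos hb0hg1
  -- ε and ψ
  set ε : ℝ := 1 - τ0 / τu with hεdef
  have hdiv_lt : τ0 / τu < 1 := (div_lt_one hτu0).mpr hτuτ0
  have hdiv_nn : 0 ≤ τ0 / τu := div_nonneg hτ0nn hτu0.le
  have hεpos : 0 < ε := by rw [hεdef]; linarith
  have hεle1 : ε ≤ 1 := by rw [hεdef]; linarith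
  clear_value ε
  set ψ : ℝ → ℝ := fun t => min (h b * Real.exp (ε * max (t - τb) 0)) (h (g 1)) with hψdef
  have hψpos : ∀ t, 0 < ψ t := fun t => lt_min (mul_pos hb0pos (Real.exp_pos _)) hg1hpos
  have hψle : ∀ t, ψ t ≤ h (g 1) := fun t => min_le_right _ _
  have hψcont : Continuous ψ := by
    apply Continuous.min _ continuous_const
    exact continuous_const.mul (Real.continuous_exp.comp
      (continuous_const.mul ((continuous_id.sub continuous_const).max continuous_const)))
  have hψbase : ∀ t, t ≤ τb → ψ t = h b := by
    intro t ht
    have hmax : max (t - τb) 0 = 0 := max_eq_right (by linarith)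
    show min (h b * Real.exp (ε * max (t - τb) 0)) (h (g 1)) = h b
    rw [hmax, mul_zero, Real.exp_zero, mul_one]
    exact min_eq_left hb0hg1.le
  have hψgrow : ∀ t₁ t₂ : ℝ, t₁ ≤ t₂ → ψ t₂ ≤ ψ t₁ * Real.exp (ε * (t₂ - t₁)) := by
    intro t₁ t₂ h12
    have hexp1 : 1 ≤ Real.exp (ε * (t₂ - t₁)) :=
      Real.one_le_exp (mul_nonneg hεpos.le (by linarith))
    rcases min_cases (h b * Real.exp (ε * max (t₁ - τb) 0)) (h (g 1)) with hc1 | hc2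
    · have e1 : ψ t₁ = h b * Real.exp (ε * max (t₁ - τb) 0) := hc1.1
      have hmle : max (t₂ - τb) 0 ≤ max (t₁ - τb) 0 + (t₂ - t₁) := by
        apply max_le
        · have := le_max_left (t₁ - τb) (0:ℝ); linarith
        · have := le_max_right (t₁ - τb) (0:ℝ); linarith
      calc ψ t₂ ≤ h b * Real.exp (ε * max (t₂ - τb) 0) := min_le_left _ _
        _ ≤ h b * Real.exp (ε * (max (t₁ - τb) 0 + (t₂ - t₁))) := by
            apply mul_le_mul_of_nonneg_left _ hb0pos.le
            exact Real.exp_le_exp.mpr (mul_le_mul_of_nonneg_left hmle hεpos.le)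
        _ = (h b * Real.exp (ε * max (t₁ - τb) 0)) * Real.exp (ε * (t₂ - t₁)) := by
            rw [mul_add, Real.exp_add, mul_assoc]
        _ = ψ t₁ * Real.exp (ε * (t₂ - t₁)) := by rw [e1]
    · have e1 : ψ t₁ = h (g 1) := hc2.1
      calc ψ t₂ ≤ h (g 1) := min_le_right _ _
        _ = ψ t₁ := e1.symm
        _ ≤ ψ t₁ * Real.exp (ε * (t₂ - t₁)) := le_mul_of_one_le_right (hψpos t₁).le hexp1
  have hψeval : ∀ t, ψ t = min (h b * Real.exp (ε * max (t - τb) 0)) (h (g 1)) :=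
    fun _ => rfl
  clear_value ψ
  have hψshrink : ∀ t₁ t₂ : ℝ, t₁ ≤ t₂ → ψ t₂ * Real.exp (-(t₂ - t₁)) ≤ ψ t₁ := by
    intro t₁ t₂ h12
    have h1 := hψgrow t₁ t₂ h12
    have h2 : ψ t₂ * Real.exp (-(t₂ - t₁))
        ≤ (ψ t₁ * Real.exp (ε * (t₂ - t₁))) * Real.exp (-(t₂ - t₁)) :=
      mul_le_mul_of_nonneg_right h1 (Real.exp_nonneg _)
    have h3 : (ψ t₁ * Real.exp (ε * (t₂ - t₁))) * Real.exp (-(t₂ - t₁))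
        = ψ t₁ * Real.exp ((ε - 1) * (t₂ - t₁)) := by
      rw [mul_assoc, ← Real.exp_add]
      congr 2
      ring
    have h4 : Real.exp ((ε - 1) * (t₂ - t₁)) ≤ 1 := by
      apply Real.exp_le_one_iff.mpr
      have hp : 0 ≤ (1 - ε) * (t₂ - t₁) :=
        mul_nonneg (by linarith only [hεle1]) (by linarith only [h12])
      linarith only [hp]
    calc ψ t₂ * Real.exp (-(t₂ - t₁)) ≤ ψ t₁ * Real.exp ((ε - 1) * (t₂ - t₁)) := by
          rw [← h3]; exact h2
      _ ≤ ψ t₁ * 1 := mul_le_mul_of_nonneg_left h4 (hψpos t₁).le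
      _ = ψ t₁ := mul_one _
  have hψb0 : ∀ t, τb ≤ t → ψ t * Real.exp (-(t - τb)) ≤ h b := by
    intro t ht
    have := hψshrink τb t ht
    rwa [hψbase τb le_rfl] at this
  -- characteristic coordinates
  have hpiFac : ∀ u : ℝ, 0 ≤ u → ∀ m ∈ Set.Icc (0:ℝ) 1,
      piF h hinv u m ∈ Set.Icc (0:ℝ) 1 ∧ h (piF h hinv u m) = h m * Real.exp (-u) := by
    intro u hu m hm
    have hhm := hmemh m hm
    have hexple : Real.exp (-u) ≤ 1 := Real.exp_le_one_iff.mpr (by linarith)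
    have harg : h m * Real.exp (-u) ∈ Set.Icc (0:ℝ) 1 :=
      ⟨mul_nonneg hhm.1 (Real.exp_nonneg _), mul_le_one₀ hhm.2 (Real.exp_nonneg _) hexple⟩
    exact ⟨hinvMaps harg, hHinv _ harg⟩
  -- bound for deriv V
  obtain ⟨M₁, hM₁⟩ := isCompact_Icc.exists_bound_of_continuousOn
    (hV.continuousOn_derivWithin (uniqueDiffOn_Icc zero_lt_one) le_rfl)
  set Mv : ℝ := max (max M₁ (max |deriv V 0| |deriv V 1|)) 0 with hMvdef
  have hMv0 : 0 ≤ Mv := le_max_right _ _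
  have hMvb : ∀ x ∈ Set.Icc (0:ℝ) 1, -Mv ≤ deriv V x := by
    intro x hx
    rcases eq_or_lt_of_le hx.1 with he | h0x
    · refine neg_le_of_abs_le ?_
      rw [← he]
      calc |deriv V 0| ≤ max |deriv V 0| |deriv V 1| := le_max_left _ _
        _ ≤ max M₁ (max |deriv V 0| |deriv V 1|) := le_max_right _ _
        _ ≤ Mv := le_max_left _ _
    rcases eq_or_lt_of_le hx.2 with he1 | hx1
    · refine neg_le_of_abs_le ?_
      rw [he1]
      calc |deriv V 1| ≤ max |deriv V 0| |deriv V 1| := le_max_right _ _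
        _ ≤ max M₁ (max |deriv V 0| |deriv V 1|) := le_max_right _ _
        _ ≤ Mv := le_max_left _ _
    · refine neg_le_of_abs_le ?_
      have hd : derivWithin V (Set.Icc (0:ℝ) 1) x = deriv V x :=
        derivWithin_of_mem_nhds (Icc_mem_nhds h0x hx1)
      have hbd := hM₁ x hx
      rw [Real.norm_eq_abs, hd] at hbd
      calc |deriv V x| ≤ M₁ := hbd
        _ ≤ max M₁ (max |deriv V 0| |deriv V 1|) := le_max_left _ _
        _ ≤ Mv := le_max_left _ _
  clear_value Mv
  -- bound for KF
  have hKb : ∀ u : ℝ, 0 ≤ u → ∀ m ∈ Set.Icc (0:ℝ) 1,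
      KF V δ h hinv u m ≤ Real.exp (u * Mv) := by
    intro u hu m hm
    show Real.exp (-∫ s in (0:ℝ)..u, (δ (piF h hinv s m) + deriv V (piF h hinv s m)))
        ≤ Real.exp (u * Mv)
    by_cases hint : IntervalIntegrable
        (fun s => δ (piF h hinv s m) + deriv V (piF h hinv s m)) MeasureTheory.volume 0 u
    · apply Real.exp_le_exp.mpr
      rw [neg_le]
      have hc : IntervalIntegrable (fun _ : ℝ => -Mv) MeasureTheory.volume 0 u :=
        intervalIntegrable_const
      have hptw : ∀ s ∈ Set.Icc (0:ℝ) u,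
          (fun _ : ℝ => -Mv) s ≤ δ (piF h hinv s m) + deriv V (piF h hinv s m) := by
        intro s hs
        have hp := hpiFac s hs.1 m hm
        have h1 := hδpos _ hp.1
        have h2 := hMvb _ hp.1
        dsimp only
        linarith
      have hmono := intervalIntegral.integral_mono_on hu hc hint hptw
      calc -(u * Mv) = ∫ _ in (0:ℝ)..u, (-Mv) := by
            rw [intervalIntegral.integral_const, smul_eq_mul]; ring
        _ ≤ _ := hmono
    · rw [intervalIntegral.integral_undef hint, neg_zero, Real.exp_zero]
      exact Real.one_le_exp (mul_nonneg hu hMv0)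
  -- continuity of slices
  have hNcont := hN.1
  have hslice_t : ∀ m ∈ Set.Icc (0:ℝ) (g 1), ∀ T : ℝ, 0 < T →
      Filter.Tendsto (fun t => N t m) (nhds T) (nhds (N T m)) := by
    intro m hm T hT
    have hc1 : ContinuousWithinAt (fun t : ℝ => N t m) (Set.Ici (0:ℝ)) T := by
      have hcomp := (hNcont (T, m) ⟨hT.le, hm⟩).comp
        (f := fun t : ℝ => ((t, m) : ℝ × ℝ))
        ((continuous_id.prodMk continuous_const).continuousWithinAt)
        (fun t ht => Set.mk_mem_prod ht hm)
      exact hcomp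
    have hnb : Set.Ici (0:ℝ) ∈ nhds T :=
      Filter.mem_of_superset (Ioi_mem_nhds hT) Set.Ioi_subset_Ici_self
    have h2 : Filter.Tendsto (fun t : ℝ => N t m) (nhdsWithin T (Set.Ici (0:ℝ)))
        (nhds (N T m)) := hc1
    rwa [nhdsWithin_eq_nhds.mpr hnb] at h2
  have hslice_m : ∀ T : ℝ, 0 ≤ T → ∀ m ∈ Set.Icc (0:ℝ) (g 1),
      Filter.Tendsto (fun m' : ℝ => N T m') (nhdsWithin m (Set.Icc (0:ℝ) (g 1)))
        (nhds (N T m)) := by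
    intro T hT m hm
    have hcomp := (hNcont (T, m) ⟨hT, hm⟩).comp
      (f := fun m' : ℝ => ((T, m') : ℝ × ℝ))
      ((continuous_const.prodMk continuous_id).continuousWithinAt)
      (fun m' hm' => Set.mk_mem_prod hT hm')
    exact hcomp
  -- the base zero region
  have hbase : ∀ t : ℝ, 0 ≤ t → t ≤ τb → ∀ m ∈ Set.Icc (0:ℝ) (g 1), h m ≤ ψ t → N t m = 0 := by
    intro t ht htb m hm hme
    rw [hψbase t htb] at hme
    have hmb : m ≤ b := le_of_h_le m (hIccsub hm) b hbmem hme
    rw [hN.2.1 t ⟨ht, htb⟩ m hm]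
    exact hφ0 t ⟨ht, htb⟩ m ⟨hm.1, hmb⟩
  set A : Set ℝ := {T : ℝ | τb ≤ T ∧ ∀ t : ℝ, 0 ≤ t → t ≤ T →
    ∀ m ∈ Set.Icc (0:ℝ) (g 1), h m ≤ ψ t → N t m = 0} with hAdef
  have hmemA : ∀ T : ℝ, T ∈ A ↔ (τb ≤ T ∧ ∀ t : ℝ, 0 ≤ t → t ≤ T →
      ∀ m ∈ Set.Icc (0:ℝ) (g 1), h m ≤ ψ t → N t m = 0) := fun T => Iff.rfl
  clear_value A
  have hτbA : τb ∈ A := (hmemA τb).mpr ⟨le_rfl, fun t ht htb m hm hme => hbase t ht htb m hm hme⟩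
  have hAne : A.Nonempty := ⟨τb, hτbA⟩
  -- main claim : A is unbounded above
  have hMain : ∀ T₀ : ℝ, ∃ T ∈ A, T₀ < T := by
    by_contra hcon
    push_neg at hcon
    obtain ⟨T₀, hT₀⟩ := hcon
    have hbddA : BddAbove A := ⟨T₀, fun T hT => hT₀ T hT⟩
    set Ts : ℝ := sSup A with hTsdef
    clear_value Ts
    have hTsτb : τb ≤ Ts := by rw [hTsdef]; exact le_csSup hbddA hτbA
    have hTs0 : (0:ℝ) < Ts := lt_of_lt_of_le hτb0 hTsτb
    have hPless : ∀ t : ℝ, 0 ≤ t → t < Ts → ∀ m ∈ Set.Icc (0:ℝ) (g 1), h m ≤ ψ t → N t m = 0 := by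
      intro t ht htT m hm hme
      rw [hTsdef] at htT
      obtain ⟨T, hTA, htT'⟩ := exists_lt_of_lt_csSup hAne htT
      exact ((hmemA T).mp hTA).2 t ht htT'.le m hm hme
    have hQlt : ∀ m ∈ Set.Icc (0:ℝ) (g 1), h m < ψ Ts → N Ts m = 0 := by
      intro m hm hme
      rcases le_or_gt Ts τb with hle | hgt
      · exact hbase Ts hTs0.le hle m hm hme.le
      · have hev1 : ∀ᶠ t in nhdsWithin Ts (Set.Iio Ts), h m < ψ t :=
          Filter.Eventually.filter_mono nhdsWithin_le_nhds
            ((isOpen_lt continuous_const hψcont).mem_nhds hme)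
        have hev2 : ∀ᶠ t in nhdsWithin Ts (Set.Iio Ts), τb < t :=
          Filter.Eventually.filter_mono nhdsWithin_le_nhds (Ioi_mem_nhds hgt)
        have hev3 : ∀ᶠ t in nhdsWithin Ts (Set.Iio Ts), t ∈ Set.Iio Ts := self_mem_nhdsWithin
        have hev0 : ∀ᶠ t in nhdsWithin Ts (Set.Iio Ts), N t m = 0 := by
          filter_upwards [hev1, hev2, hev3] with t h1 h2 h3
          exact hPless t (le_trans hτb0.le h2.le) h3 m hm h1.le
        have hc3 : Filter.Tendsto (fun t => N t m) (nhdsWithin Ts (Set.Iio Ts))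
            (nhds (N Ts m)) := (hslice_t m hm Ts hTs0).mono_left nhdsWithin_le_nhds
        have hz : Filter.Tendsto (fun t => N t m) (nhdsWithin Ts (Set.Iio Ts)) (nhds (0:ℝ)) := by
          refine Filter.Tendsto.congr' ?_ tendsto_const_nhds
          filter_upwards [hev0] with t h1
          exact h1.symm
        exact tendsto_nhds_unique hc3 hz
    have hQTs : ∀ m ∈ Set.Icc (0:ℝ) (g 1), h m ≤ ψ Ts → N Ts m = 0 := by
      intro m hm hme
      rcases lt_or_eq_of_le hme with hlt | heq
      · exact hQlt m hm hlt
      · have hmpos : 0 < m := by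
          rcases eq_or_lt_of_le hm.1 with he | hp
          · exfalso
            rw [← he, hH0] at heq
            exact absurd heq.symm (ne_of_gt (hψpos Ts))
          · exact hp
        have hff : nhdsWithin m (Set.Ioo 0 m) = nhdsWithin m (Set.Iio m) := by
          rw [← Set.Ioi_inter_Iio]
          exact nhdsWithin_inter_of_mem (mem_nhdsWithin_of_mem_nhds (Ioi_mem_nhds hmpos))
        have hev1 : ∀ᶠ m' in nhdsWithin m (Set.Ioo 0 m), m' ∈ Set.Ioo 0 m := self_mem_nhdsWithin
        have hev0 : ∀ᶠ m' in nhdsWithin m (Set.Ioo 0 m), N Ts m' = 0 := by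
          filter_upwards [hev1] with m' hm'
          have hm'mem : m' ∈ Set.Icc (0:ℝ) (g 1) := ⟨hm'.1.le, le_trans hm'.2.le hm.2⟩
          have hlt2 : h m' < h m := hHmono (hIccsub hm'mem) (hIccsub hm) hm'.2
          exact hQlt m' hm'mem (by rw [← heq]; exact hlt2)
        have hsub : Set.Ioo (0:ℝ) m ⊆ Set.Icc (0:ℝ) (g 1) :=
          fun x hx => ⟨hx.1.le, le_trans hx.2.le hm.2⟩
        have hc3 : Filter.Tendsto (fun m' => N Ts m') (nhdsWithin m (Set.Ioo 0 m))
            (nhds (N Ts m)) :=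
          (hslice_m Ts hTs0.le m hm).mono_left (nhdsWithin_mono m hsub)
        have hz : Filter.Tendsto (fun m' => N Ts m') (nhdsWithin m (Set.Ioo 0 m))
            (nhds (0:ℝ)) := by
          refine Filter.Tendsto.congr' ?_ tendsto_const_nhds
          filter_upwards [hev0] with m' h1
          exact h1.symm
        have hNB : Filter.NeBot (nhdsWithin m (Set.Ioo 0 m)) := by
          rw [hff]; infer_instance
        exact tendsto_nhds_unique hc3 hz
    have hPTs : ∀ t' : ℝ, 0 ≤ t' → t' ≤ Ts → ∀ m ∈ Set.Icc (0:ℝ) (g 1),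
        h m ≤ ψ t' → N t' m = 0 := by
      intro t' h0 hTs' m hm hme
      rcases lt_or_eq_of_le hTs' with hlt | heq
      · exact hPless t' h0 hlt m hm hme
      · rw [heq]
        rw [heq] at hme
        exact hQTs m hm hme
    -- bounds for the contraction step
    obtain ⟨R, hR⟩ := ((isCompact_Icc (a := (0:ℝ)) (b := Ts + 1)).prod
      (isCompact_Icc (a := (0:ℝ)) (b := g 1))).exists_bound_of_continuousOn
      (hNcont.mono (Set.prod_mono Set.Icc_subset_Ici_self subset_rfl))
    have hR0 : 0 ≤ R := le_trans (norm_nonneg _)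
      (hR ((0:ℝ), (0:ℝ)) (Set.mk_mem_prod ⟨le_rfl, by linarith⟩ ⟨le_rfl, hg1pos.le⟩))
    obtain ⟨B, hB⟩ := ((isCompact_Icc (a := (0:ℝ)) (b := g 1)).prod
      (isCompact_Icc (a := -R) (b := R))).exists_bound_of_continuousOn
      (hβcont.mono (Set.prod_mono subset_rfl (Set.subset_univ _)))
    have hB0 : 0 ≤ B := le_trans (norm_nonneg _)
      (hB ((0:ℝ), (0:ℝ)) (Set.mk_mem_prod ⟨le_rfl, hg1pos.le⟩ ⟨neg_nonpos.mpr hR0, hR0⟩))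
    set η : ℝ := min (min 1 τu) (1 / (2 * (Real.exp Mv * B + 1))) with hηdef
    have hexpB : (0:ℝ) ≤ Real.exp Mv * B := mul_nonneg (Real.exp_nonneg _) hB0
    have hden : (0:ℝ) < 2 * (Real.exp Mv * B + 1) := by linarith
    have hη0 : 0 < η := lt_min (lt_min one_pos hτu0) (one_div_pos.mpr hden)
    have hη1 : η ≤ 1 := le_trans (min_le_left _ _) (min_le_left _ _)
    have hητu : η ≤ τu := le_trans (min_le_left _ _) (min_le_right _ _)
    have hηc : Real.exp Mv * B * η ≤ 1 / 2 := by
      have h1 : η ≤ 1 / (2 * (Real.exp Mv * B + 1)) := min_le_right _ _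
      have h3 : Real.exp Mv * B * η ≤ Real.exp Mv * B * (1 / (2 * (Real.exp Mv * B + 1))) :=
        mul_le_mul_of_nonneg_left h1 hexpB
      have h4 : Real.exp Mv * B * (1 / (2 * (Real.exp Mv * B + 1))) ≤ 1 / 2 := by
        rw [mul_one_div, div_le_div_iff₀ hden (by norm_num)]
        linarith only [hexpB]
      linarith
    clear_value η
    set E : Set (ℝ × ℝ) := {p : ℝ × ℝ | p.1 ∈ Set.Icc Ts (Ts + η) ∧
      p.2 ∈ Set.Icc (0:ℝ) (g 1) ∧ h p.2 ≤ ψ p.1} with hEdef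
    have hE0mem : ((Ts, (0:ℝ)) : ℝ × ℝ) ∈ E := by
      refine ⟨⟨le_rfl, ?_⟩, ⟨le_rfl, hg1pos.le⟩, ?_⟩
      · show Ts ≤ Ts + η
        linarith
      · show h 0 ≤ ψ Ts
        rw [hH0]
        exact (hψpos Ts).le
    have hEbdd : BddAbove ((fun p : ℝ × ℝ => |N p.1 p.2|) '' E) := by
      refine ⟨R, ?_⟩
      rintro x ⟨p, hp, rfl⟩
      have h1 : ‖N p.1 p.2‖ ≤ R :=
        hR p ⟨⟨le_trans hTs0.le hp.1.1, by have := hp.1.2; linarith⟩, hp.2.1⟩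
      rwa [Real.norm_eq_abs] at h1
    set S : ℝ := sSup ((fun p : ℝ × ℝ => |N p.1 p.2|) '' E) with hSdef
    have hNle : ∀ p ∈ E, |N p.1 p.2| ≤ S := fun p hp => le_csSup hEbdd ⟨p, hp, rfl⟩
    have hS0 : 0 ≤ S := by
      have h1 : N Ts 0 = 0 := hQTs 0 ⟨le_rfl, hg1pos.le⟩ (by rw [hH0]; exact (hψpos Ts).le)
      have h2 := hNle (Ts, 0) hE0mem
      simp only [h1, abs_zero] at h2
      exact h2
    have hRHSnn : 0 ≤ Real.exp Mv * B * S * η :=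
      mul_nonneg (mul_nonneg (mul_nonneg (Real.exp_nonneg _) hB0) hS0) hη0.le
    -- the key estimate
    have hkey : ∀ t : ℝ, Ts < t → t ≤ Ts + η → ∀ m ∈ Set.Icc (0:ℝ) (g 1), h m ≤ ψ t →
        |N t m| ≤ Real.exp Mv * B * S * η := by
      intro t htTs htη m hm hmψ
      have hτbt : τb ≤ t := le_trans hTsτb htTs.le
      have ht0 : (0:ℝ) ≤ t := le_trans hτb0.le hτbt
      have hm1 : m ∈ Set.Icc (0:ℝ) 1 := hIccsub hm
      have hcoord : ∀ s : ℝ, s ≤ t → h (piF h hinv (t - s) m) ≤ ψ s ∧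
          piF h hinv (t - s) m ∈ Set.Icc (0:ℝ) (g 1) := by
        intro s hs
        have hppi := hpiFac (t - s) (by linarith) m hm1
        have h1 : h (piF h hinv (t - s) m) ≤ ψ s := by
          rw [hppi.2]
          calc h m * Real.exp (-(t - s)) ≤ ψ t * Real.exp (-(t - s)) :=
              mul_le_mul_of_nonneg_right hmψ (Real.exp_nonneg _)
            _ ≤ ψ s := hψshrink s t hs
        exact ⟨h1, ⟨hppi.1.1, le_of_h_le _ hppi.1 _ hg1mem (le_trans h1 (hψle s))⟩⟩
      -- vanishing of the division term
      have hDz : ∀ s : ℝ, τb ≤ s → s ≤ t → ∀ a : ℝ, τu ≤ a → a ≤ τb →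
          N (s - a) (DeltaF h hinv ginv a (piF h hinv (t - s) m)) = 0 := by
        intro s hsτb hst a haτu haτb
        have hms := hcoord s hst
        set w : ℝ := piF h hinv (t - s) m with hwdef
        have hwg1 : w ∈ Set.Icc (0:ℝ) (g 1) := hms.2
        have hgw : ginv w ∈ Set.Icc (0:ℝ) 1 := hginv_mem w hwg1
        have hhgw := hmemh _ hgw
        have hexpa : Real.exp (-a) ≤ 1 := Real.exp_le_one_iff.mpr (by linarith)
        have harg : h (ginv w) * Real.exp (-a) ∈ Set.Icc (0:ℝ) 1 :=
          ⟨mul_nonneg hhgw.1 (Real.exp_nonneg _), mul_le_one₀ hhgw.2 (Real.exp_nonneg _) hexpa⟩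
        have hΔmem : DeltaF h hinv ginv a w ∈ Set.Icc (0:ℝ) 1 := hinvMaps harg
        have hΔh : h (DeltaF h hinv ginv a w) = h (ginv w) * Real.exp (-a) := hHinv _ harg
        have hXle : ε * (t - (s - a)) + (-(t - s) + (τ0 + -a)) ≤ 0 := by
          rw [hεdef]
          have hq : τ0 = τ0 / τu * τu := (div_mul_cancel₀ τ0 (ne_of_gt hτu0)).symm
          linarith only [hq, mul_nonneg hdiv_nn (sub_nonneg.mpr hst),
            mul_nonneg hdiv_nn (sub_nonneg.mpr haτu)]
        have h1r : h (ginv w) ≤ h w * Real.exp τ0 := hratio w hwg1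
        have h2c : h w = h m * Real.exp (-(t - s)) := (hpiFac (t - s) (by linarith) m hm1).2
        have h4g : ψ t ≤ ψ (s - a) * Real.exp (ε * (t - (s - a))) :=
          hψgrow (s - a) t (by linarith)
        have hΔle : h (DeltaF h hinv ginv a w) ≤ ψ (s - a) := by
          rw [hΔh]
          calc h (ginv w) * Real.exp (-a)
              ≤ (h w * Real.exp τ0) * Real.exp (-a) :=
                mul_le_mul_of_nonneg_right h1r (Real.exp_nonneg _)
            _ = h m * Real.exp (-(t - s) + (τ0 + -a)) := by
                rw [h2c]; simp only [Real.exp_add]; ring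
            _ ≤ (ψ (s - a) * Real.exp (ε * (t - (s - a)))) * Real.exp (-(t - s) + (τ0 + -a)) :=
                mul_le_mul_of_nonneg_right (le_trans hmψ h4g) (Real.exp_nonneg _)
            _ = ψ (s - a) * Real.exp (ε * (t - (s - a)) + (-(t - s) + (τ0 + -a))) := by
                simp only [Real.exp_add]; ring
            _ ≤ ψ (s - a) * 1 :=
                mul_le_mul_of_nonneg_left (Real.exp_le_one_iff.mpr hXle) (hψpos _).le
            _ = ψ (s - a) := mul_one _
        have hΔg1 : DeltaF h hinv ginv a w ∈ Set.Icc (0:ℝ) (g 1) :=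
          ⟨hΔmem.1, le_of_h_le _ hΔmem _ hg1mem (le_trans hΔle (hψle _))⟩
        exact hPTs (s - a) (by linarith) (by linarith) _ hΔg1 hΔle
      -- the equation
      have heqn := hN.2.2 t hτbt m hm
      have hφz : φ τb (piF h hinv (t - τb) m) = 0 := by
        have hppi := hpiFac (t - τb) (by linarith) m hm1
        have h1 : h (piF h hinv (t - τb) m) ≤ h b := by
          rw [hppi.2]
          calc h m * Real.exp (-(t - τb)) ≤ ψ t * Real.exp (-(t - τb)) :=
              mul_le_mul_of_nonneg_right hmψ (Real.exp_nonneg _)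
            _ ≤ h b := hψb0 t hτbt
        exact hφ0 τb ⟨hτb0.le, le_rfl⟩ _ ⟨hppi.1.1, le_of_h_le _ hppi.1 b hbmem h1⟩
      have hGz : GFun V δ γ h hinv ginv β k τu τb N t m = 0 := by
        have hzero : Set.EqOn (fun s =>
            (∫ a in τu..τb,
              zetaF V γ h hinv ginv k (piF h hinv (t - s) m) a *
                β (DeltaF h hinv ginv a (piF h hinv (t - s) m))
                  (N (s - a) (DeltaF h hinv ginv a (piF h hinv (t - s) m))) *
                N (s - a) (DeltaF h hinv ginv a (piF h hinv (t - s) m))) *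
              KF V δ h hinv (t - s) m) (fun _ => (0:ℝ)) (Set.uIcc τb t) := by
          intro s hs
          rw [Set.uIcc_of_le hτbt] at hs
          have hinner : Set.EqOn (fun a =>
              zetaF V γ h hinv ginv k (piF h hinv (t - s) m) a *
                β (DeltaF h hinv ginv a (piF h hinv (t - s) m))
                  (N (s - a) (DeltaF h hinv ginv a (piF h hinv (t - s) m))) *
                N (s - a) (DeltaF h hinv ginv a (piF h hinv (t - s) m)))
              (fun _ => (0:ℝ)) (Set.uIcc τu τb) := by
            intro a ha
            rw [Set.uIcc_of_le hτb.le] at ha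
            have hNz := hDz s hs.1 hs.2 a ha.1 ha.2
            dsimp only
            rw [hNz, mul_zero]
          dsimp only
          rw [intervalIntegral.integral_congr hinner, intervalIntegral.integral_zero, zero_mul]
        unfold GFun
        rw [intervalIntegral.integral_congr hzero, intervalIntegral.integral_zero, mul_zero]
      rw [hφz, hGz, zero_mul, zero_add, zero_sub] at heqn
      rw [heqn, abs_neg]
      set f : ℝ → ℝ := fun s =>
        KF V δ h hinv (t - s) m * β (piF h hinv (t - s) m) (N s (piF h hinv (t - s) m)) *
          N s (piF h hinv (t - s) m) with hfdef
      have hJeq : JFun V δ h hinv β τb N t m = ∫ s in τb..t, f s := rfl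
      rw [hJeq]
      by_cases hint : IntervalIntegrable f MeasureTheory.volume τb t
      · have hsub1 : Set.uIcc τb Ts ⊆ Set.uIcc τb t := by
          rw [Set.uIcc_of_le hTsτb, Set.uIcc_of_le hτbt]
          exact Set.Icc_subset_Icc le_rfl htTs.le
        have hsub2 : Set.uIcc Ts t ⊆ Set.uIcc τb t := by
          rw [Set.uIcc_of_le htTs.le, Set.uIcc_of_le hτbt]
          exact Set.Icc_subset_Icc hTsτb le_rfl
        have hsplit := intervalIntegral.integral_add_adjacent_intervals
          (hint.mono_set hsub1) (hint.mono_set hsub2)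
        have hfz : Set.EqOn f (fun _ => (0:ℝ)) (Set.uIcc τb Ts) := by
          intro s hs
          rw [Set.uIcc_of_le hTsτb] at hs
          have hst : s ≤ t := le_trans hs.2 htTs.le
          have hc := hcoord s hst
          have hNz : N s (piF h hinv (t - s) m) = 0 :=
            hPTs s (le_trans hτb0.le hs.1) hs.2 _ hc.2 hc.1
          simp only [hfdef]
          rw [hNz, mul_zero]
        have h1z : (∫ s in τb..Ts, f s) = 0 := by
          rw [intervalIntegral.integral_congr hfz]
          exact intervalIntegral.integral_zero
        have h2' : ‖∫ s in Ts..t, f s‖ ≤ (Real.exp Mv * B * S) * |t - Ts| := by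
          apply intervalIntegral.norm_integral_le_of_norm_le_const
          intro s hs
          rw [Set.uIoc_of_le htTs.le] at hs
          have hsTs : Ts ≤ s := hs.1.le
          have hst : s ≤ t := hs.2
          have hc := hcoord s hst
          set w' : ℝ := piF h hinv (t - s) m with hw'def
          have hw'g1 : w' ∈ Set.Icc (0:ℝ) (g 1) := hc.2
          have hNR : |N s w'| ≤ R := by
            have h1 := hR (s, w') (Set.mk_mem_prod ⟨le_trans hTs0.le hsTs, by linarith⟩ hw'g1)
            rwa [Real.norm_eq_abs] at h1
          have hNmem : N s w' ∈ Set.Icc (-R) R := ⟨neg_le_of_abs_le hNR, le_of_abs_le hNR⟩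
          have hβB : β w' (N s w') ≤ B := by
            have h1 := hB (w', N s w') (Set.mk_mem_prod hw'g1 hNmem)
            rw [Real.norm_eq_abs] at h1
            exact le_trans (le_abs_self _) h1
          have hβnn : 0 ≤ β w' (N s w') := hβpos w' hw'g1 _
          have hNS : |N s w'| ≤ S := by
            refine hNle (s, w') ⟨⟨hsTs, ?_⟩, hw'g1, hc.1⟩
            show s ≤ Ts + η
            linarith
          have hKle : KF V δ h hinv (t - s) m ≤ Real.exp Mv := by
            calc KF V δ h hinv (t - s) m ≤ Real.exp ((t - s) * Mv) :=
                hKb (t - s) (by linarith) m hm1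
              _ ≤ Real.exp (1 * Mv) :=
                Real.exp_le_exp.mpr (mul_le_mul_of_nonneg_right (by linarith) hMv0)
              _ = Real.exp Mv := by rw [one_mul]
          have hKnn : (0:ℝ) ≤ KF V δ h hinv (t - s) m := le_of_lt (Real.exp_pos _)
          simp only [hfdef]
          rw [Real.norm_eq_abs, abs_mul, abs_mul, abs_of_nonneg hKnn, abs_of_nonneg hβnn]
          exact mul_le_mul (mul_le_mul hKle hβB hβnn (Real.exp_nonneg _)) hNS (abs_nonneg _)
            (mul_nonneg (Real.exp_nonneg _) hB0)
        rw [← hsplit, h1z, zero_add]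
        have hle1 : |t - Ts| ≤ η := by
          rw [abs_of_nonneg (by linarith)]; linarith
        rw [Real.norm_eq_abs] at h2'
        calc |∫ s in Ts..t, f s| ≤ Real.exp Mv * B * S * |t - Ts| := h2'
          _ ≤ Real.exp Mv * B * S * η := mul_le_mul_of_nonneg_left hle1
            (mul_nonneg (mul_nonneg (Real.exp_nonneg _) hB0) hS0)
      · rw [intervalIntegral.integral_undef hint, abs_zero]
        exact hRHSnn
    -- conclude S = 0
    have hSle' : sSup ((fun p : ℝ × ℝ => |N p.1 p.2|) '' E) ≤ Real.exp Mv * B * S * η := by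
      apply csSup_le (Set.Nonempty.image _ ⟨(Ts, 0), hE0mem⟩)
      rintro x ⟨p, hp, rfl⟩
      obtain ⟨hp1, hp2, hp3⟩ := hp
      show |N p.1 p.2| ≤ Real.exp Mv * B * S * η
      rcases eq_or_lt_of_le hp1.1 with heq | hlt
      · have hz : N p.1 p.2 = 0 := by
          rw [← heq]
          rw [← heq] at hp3
          exact hQTs p.2 hp2 hp3
        rw [hz, abs_zero]
        exact hRHSnn
      · exact hkey p.1 hlt hp1.2 p.2 hp2 hp3
    have hSle : S ≤ Real.exp Mv * B * S * η := by
      rw [hSdef]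
      exact hSle'
    have hS00 : S = 0 := by
      have hfact : 0 ≤ S * (1 / 2 - Real.exp Mv * B * η) :=
        mul_nonneg hS0 (by linarith only [hηc])
      refine le_antisymm (by nlinarith only [hSle, hfact]) hS0
    have hTA2 : Ts + η ∈ A := by
      refine (hmemA _).mpr ⟨by linarith, ?_⟩
      intro t ht htle m hm hme
      rcases le_or_gt t Ts with hle | hgt
      · exact hPTs t ht hle m hm hme
      · have h1 := hkey t hgt htle m hm hme
        rw [hS00] at h1
        simp only [mul_zero, zero_mul] at h1
        exact abs_eq_zero.mp (le_antisymm h1 (abs_nonneg _))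
    have hcontra := le_csSup hbddA hTA2
    rw [← hTsdef] at hcontra
    linarith
  -- conclusion
  refine ⟨max (τb + (Real.log (h (g 1)) - Real.log (h b)) / ε) 0, le_max_right _ _, ?_⟩
  intro t ht m hm
  have ht0 : (0:ℝ) ≤ t := le_trans (le_max_right _ _) ht
  obtain ⟨T, hTA, htT⟩ := hMain t
  have hlognn : 0 ≤ Real.log (h (g 1)) - Real.log (h b) :=
    sub_nonneg.mpr (Real.log_le_log hb0pos hb0hg1.le)
  have ht1 : τb + (Real.log (h (g 1)) - Real.log (h b)) / ε ≤ t := le_trans (le_max_left _ _) ht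
  have hdivnn : 0 ≤ (Real.log (h (g 1)) - Real.log (h b)) / ε := div_nonneg hlognn hεpos.le
  have hmax : max (t - τb) 0 = t - τb := max_eq_left (by linarith)
  have h2 : Real.log (h (g 1)) - Real.log (h b) ≤ ε * (t - τb) := by
    have h3 := (div_le_iff₀ hεpos).mp
      (by linarith : (Real.log (h (g 1)) - Real.log (h b)) / ε ≤ t - τb)
    linarith
  have hcap : ψ t = h (g 1) := by
    rw [hψeval t, hmax]
    apply min_eq_right
    calc h (g 1) = (h (g 1) / h b) * h b := (div_mul_cancel₀ _ (ne_of_gt hb0pos)).symm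
      _ = h b * (h (g 1) / h b) := mul_comm _ _
      _ = h b * Real.exp (Real.log (h (g 1)) - Real.log (h b)) := by
          rw [Real.exp_sub, Real.exp_log hg1hpos, Real.exp_log hb0pos]
      _ ≤ h b * Real.exp (ε * (t - τb)) :=
        mul_le_mul_of_nonneg_left (Real.exp_le_exp.mpr h2) hb0pos.le
  apply ((hmemA T).mp hTA).2 t ht0 htT.le m hm
  rw [hcap]
  exact (hHmono.le_iff_le (hIccsub hm) hg1mem).mpr hm.2
end

section
/- Suppose in addition that there exists α > 0 with V(s)/(α s) → 1 as s → 0⁺ (i.e. V(s) ~ α s at 0) and that g is differentiable at 0. Then there exists C ≥ 0 such that ∫_m^{g⁻¹(m)} ds/V(s) ≤ C for all m ∈ (0,g(1)] if and only if g'(0) > 0. -/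
open Set Filter MeasureTheory intervalIntegral

/-- Extract a concrete δ from an eventual statement on `𝓝[>] 0`. -/
lemma aux_ev_19 {P : ℝ → Prop} (h : ∀ᶠ x in nhdsWithin 0 (Set.Ioi 0), P x) :
    ∃ δ > (0:ℝ), ∀ x, 0 < x → x < δ → P x := by
  rw [Filter.eventually_iff, Metric.mem_nhdsWithin_iff] at h
  obtain ⟨δ, hδ, hsub⟩ := h
  refine ⟨δ, hδ, fun x hx hxδ => hsub ⟨?_, hx⟩⟩
  simpa [Metric.mem_ball, Real.dist_eq, abs_of_pos hx] using hxδ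

/-- The slope limit from a one-sided derivative at 0. -/
lemma aux_slope_19 {g : ℝ → ℝ} {L : ℝ} (hg0 : g 0 = 0)
    (h : HasDerivWithinAt g L (Set.Ici 0) 0) :
    Filter.Tendsto (fun m => g m / m) (nhdsWithin 0 (Set.Ioi 0)) (nhds L) := by
  rw [hasDerivWithinAt_iff_tendsto_slope, Set.Ici_sdiff_left] at h
  refine Filter.Tendsto.congr' ?_ h
  filter_upwards [self_mem_nhdsWithin] with m hm
  have hm0 : m ≠ 0 := ne_of_gt hm
  simp [slope_def_field, hg0]

/-- Integral of `c * s⁻¹` over a positive interval. -/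
lemma aux_int_19 {a b c : ℝ} (ha : 0 < a) (hab : a ≤ b) :
    ∫ s in a..b, c * s⁻¹ = c * Real.log (b / a) := by
  have h0 : (0:ℝ) ∉ Set.uIcc a b := by
    rw [Set.uIcc_of_le hab]
    intro h
    linarith [h.1]
  rw [intervalIntegral.integral_const_mul, integral_inv h0]

theorem stmt_19
    (V : ℝ → ℝ)
    (hV : ContDiffOn ℝ 1 V (Set.Icc 0 1))
    (hV0 : V 0 = 0)
    (hVpos : ∀ m ∈ Set.Ioc (0:ℝ) 1, 0 < V m)
    (hVdiv : ∀ m ∈ Set.Ioc (0:ℝ) 1,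
      ¬ IntervalIntegrable (fun s => (V s)⁻¹) MeasureTheory.volume 0 m)
    (g ginv : ℝ → ℝ)
    (hgcont : ContinuousOn g (Set.Icc 0 1))
    (hgC1 : ContDiffOn ℝ 1 g (Set.Ico 0 1))
    (hgmono : StrictMonoOn g (Set.Icc 0 1))
    (hglt : ∀ m ∈ Set.Ioo (0:ℝ) 1, g m < m)
    (hgmaps : Set.MapsTo g (Set.Icc 0 1) (Set.Icc 0 1))
    (hg0 : g 0 = 0)
    (hginvg : ∀ m ∈ Set.Icc (0:ℝ) 1, ginv (g m) = m)
    (hgginv : ∀ x ∈ Set.Icc (0:ℝ) (g 1), g (ginv x) = x)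
    (hginvext : ∀ x : ℝ, g 1 < x → ginv x = 1)
    (α : ℝ) (hα : 0 < α)
    (hVsim : Filter.Tendsto (fun s => V s / (α * s)) (nhdsWithin 0 (Set.Ioi 0)) (nhds 1))
    (hgdiff : DifferentiableWithinAt ℝ g (Set.Ici 0) 0) :
    (∃ C : ℝ, 0 ≤ C ∧
      ∀ m ∈ Set.Ioc (0:ℝ) (g 1), ∫ s in m..(ginv m), (V s)⁻¹ ≤ C) ↔
      0 < derivWithin g (Set.Ici 0) 0 := by
  set L := derivWithin g (Set.Ici 0) 0 with hLdef
  have hder : HasDerivWithinAt g L (Set.Ici 0) 0 := hgdiff.hasDerivWithinAt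
  have hslope := aux_slope_19 hg0 hder
  have h01 : (0:ℝ) ∈ Set.Icc (0:ℝ) 1 := Set.left_mem_Icc.2 zero_le_one
  have h11 : (1:ℝ) ∈ Set.Icc (0:ℝ) 1 := Set.right_mem_Icc.2 zero_le_one
  have hg1le : g 1 ≤ 1 := (hgmaps h11).2
  -- g m ≤ m on [0,1]
  have hgle : ∀ m ∈ Set.Icc (0:ℝ) 1, g m ≤ m := by
    intro m hm
    rcases eq_or_lt_of_le hm.1 with h | h
    · rw [← h, hg0]
    rcases eq_or_lt_of_le hm.2 with h' | h'
    · rw [h']; exact hg1le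
    · exact (hglt m ⟨h, h'⟩).le
  -- basic properties of ginv on (0, g 1]
  have hginv_mem : ∀ x ∈ Set.Ioc (0:ℝ) (g 1),
      (ginv x ∈ Set.Ioc (0:ℝ) 1) ∧ g (ginv x) = x ∧ x ≤ ginv x := by
    intro x hx
    have hsurj : Set.Icc (g 0) (g 1) ⊆ g '' Set.Icc 0 1 :=
      intermediate_value_Icc zero_le_one hgcont
    obtain ⟨m, hm, hgm⟩ := hsurj ⟨by rw [hg0]; exact hx.1.le, hx.2⟩
    have hge : ginv x = m := by rw [← hgm, hginvg m hm]
    have hmpos : 0 < m := by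
      rcases eq_or_lt_of_le hm.1 with h | h
      · exfalso; rw [← h, hg0] at hgm; exact absurd hgm.symm (ne_of_gt hx.1)
      · exact h
    have hggx : g (ginv x) = x := by rw [hge, hgm]
    refine ⟨by rw [hge]; exact ⟨hmpos, hm.2⟩, hggx, ?_⟩
    by_contra hlt
    push_neg at hlt
    have hx1 : x ≤ 1 := hx.2.trans hg1le
    have hxm : x ∈ Set.Icc (0:ℝ) 1 := ⟨hx.1.le, hx1⟩
    have : g (ginv x) < g x := hgmono (by rw [hge]; exact ⟨hm.1, hm.2⟩) hxm hlt
    rw [hggx] at this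
    exact absurd (this.trans_le (hgle x hxm)) (lt_irrefl x)
  -- V band near 0
  obtain ⟨δ₂, hδ₂pos, hδ₂le, hband⟩ :
      ∃ δ₂ > (0:ℝ), δ₂ ≤ 1 ∧ ∀ s, 0 < s → s < δ₂ → α / 2 * s < V s ∧ V s < 2 * α * s := by
    have h1 : ∀ᶠ s in nhdsWithin 0 (Set.Ioi 0),
        1/2 < V s / (α * s) ∧ V s / (α * s) < 2 :=
      (hVsim.eventually_const_lt (by norm_num)).and (hVsim.eventually_lt_const (by norm_num))
    obtain ⟨δ, hδ, h⟩ := aux_ev_19 h1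
    refine ⟨min δ 1, by positivity, min_le_right _ _, fun s hs hs' => ?_⟩
    obtain ⟨h1', h2'⟩ := h s hs (lt_of_lt_of_le hs' (min_le_left _ _))
    have hαs : 0 < α * s := by positivity
    constructor
    · have := (lt_div_iff₀ hαs).1 h1'
      nlinarith
    · have := (div_lt_iff₀ hαs).1 h2'
      nlinarith
  have hVcont : ContinuousOn V (Set.Icc 0 1) := hV.continuousOn
  -- continuity of the integrand away from 0
  have hinvcont : ∀ a b : ℝ, 0 < a → b ≤ 1 →
      ContinuousOn (fun s => (V s)⁻¹) (Set.Icc a b) := by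
    intro a b ha hb
    refine (hVcont.mono (Set.Icc_subset_Icc ha.le hb)).inv₀ ?_
    intro s hs
    exact (hVpos s ⟨ha.trans_le hs.1, hs.2.trans hb⟩).ne'
  constructor
  · -- boundedness implies positive derivative
    rintro ⟨C, hC0, hC⟩
    by_contra hL
    push_neg at hL
    have hL0 : L = 0 := by
      refine le_antisymm hL (ge_of_tendsto hslope ?_)
      filter_upwards [Ioo_mem_nhdsGT_of_mem (Set.left_mem_Ico.2 zero_lt_one)] with m hm
      exact div_nonneg (hgmaps ⟨hm.1.le, hm.2.le⟩).1 hm.1.le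
    set K := Real.exp (2 * α * (C + 1)) with hKdef
    have hKpos : 0 < K := Real.exp_pos _
    have hK1 : 1 ≤ K := Real.one_le_exp (by positivity)
    have hev : ∀ᶠ m in nhdsWithin 0 (Set.Ioi 0), g m / m < K⁻¹ := by
      rw [hL0] at hslope
      exact hslope.eventually_lt_const (by positivity)
    obtain ⟨δ, hδpos, hδ⟩ := aux_ev_19 hev
    set m₀ := min δ δ₂ / 2 with hm₀def
    have hm₀pos : 0 < m₀ := by positivity
    have hm₀δ : m₀ < δ := by
      have : min δ δ₂ ≤ δ := min_le_left _ _
      simp only [hm₀def]; linarith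
    have hm₀δ₂ : m₀ < δ₂ := by
      have : min δ δ₂ ≤ δ₂ := min_le_right _ _
      simp only [hm₀def]; linarith
    have hm₀1 : m₀ ≤ 1 := by linarith
    have hm₀mem : m₀ ∈ Set.Icc (0:ℝ) 1 := ⟨hm₀pos.le, hm₀1⟩
    set x := g m₀ with hxdef
    have hxpos : 0 < x := by
      have := hgmono h01 hm₀mem hm₀pos
      rwa [hg0] at this
    have hxg1 : x ≤ g 1 := hgmono.monotoneOn hm₀mem h11 hm₀1
    have hginvx : ginv x = m₀ := hginvg m₀ hm₀mem
    have hslopebound : g m₀ / m₀ < K⁻¹ := hδ m₀ hm₀pos hm₀δ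
    have hxlt : x < K⁻¹ * m₀ := by
      rw [div_lt_iff₀ hm₀pos] at hslopebound
      simpa [hxdef] using hslopebound
    have hKx : K * x < m₀ := by
      have := mul_lt_mul_of_pos_left hxlt hKpos
      rwa [← mul_assoc, mul_inv_cancel₀ hKpos.ne', one_mul] at this
    have hxKx : x ≤ K * x := le_mul_of_one_le_left hxpos.le hK1
    have hxm₀ : x ≤ m₀ := hxKx.trans hKx.le
    -- integrability
    have hint : IntervalIntegrable (fun s => (V s)⁻¹) volume x m₀ := by
      apply ContinuousOn.intervalIntegrable
      rw [Set.uIcc_of_le hxm₀]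
      exact hinvcont x m₀ hxpos hm₀1
    have hsub1 : Set.uIcc x (K * x) ⊆ Set.uIcc x m₀ := by
      rw [Set.uIcc_of_le hxKx, Set.uIcc_of_le hxm₀]
      exact Set.Icc_subset_Icc le_rfl hKx.le
    have hsub2 : Set.uIcc (K * x) m₀ ⊆ Set.uIcc x m₀ := by
      rw [Set.uIcc_of_le hKx.le, Set.uIcc_of_le hxm₀]
      exact Set.Icc_subset_Icc hxKx le_rfl
    have hint1 := hint.mono_set hsub1
    have hint2 := hint.mono_set hsub2
    -- the comparison integrand
    have hintc : IntervalIntegrable (fun s => (2 * α)⁻¹ * s⁻¹) volume x (K * x) := by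
      apply ContinuousOn.intervalIntegrable
      apply ContinuousOn.mul continuousOn_const
      apply ContinuousOn.inv₀ continuousOn_id
      intro s hs
      rw [Set.uIcc_of_le hxKx] at hs
      exact ne_of_gt (hxpos.trans_le hs.1)
    have hptwise : ∀ s ∈ Set.Icc x (K * x), (2 * α)⁻¹ * s⁻¹ ≤ (V s)⁻¹ := by
      intro s hs
      have hspos : 0 < s := hxpos.trans_le hs.1
      have hsδ₂ : s < δ₂ := lt_of_le_of_lt hs.2 (hKx.trans hm₀δ₂)
      obtain ⟨hlow, hhigh⟩ := hband s hspos hsδ₂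
      have hVs : 0 < V s := lt_trans (by positivity) hlow
      have h7 := inv_anti₀ hVs hhigh.le
      calc (2 * α)⁻¹ * s⁻¹ = (2 * α * s)⁻¹ := (mul_inv _ _).symm
        _ ≤ (V s)⁻¹ := h7
    have hstep3 : ∫ s in x..(K * x), (2 * α)⁻¹ * s⁻¹ ≤ ∫ s in x..(K * x), (V s)⁻¹ :=
      intervalIntegral.integral_mono_on hxKx hintc hint1 hptwise
    have hstep4 : ∫ s in x..(K * x), (2 * α)⁻¹ * s⁻¹ = C + 1 := by
      have hKxx : K * x / x = K := by field_simp
      rw [aux_int_19 hxpos hxKx, hKxx, hKdef, Real.log_exp]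
      exact inv_mul_cancel_left₀ (by positivity) (C + 1)
    have hstep2 : 0 ≤ ∫ s in (K * x)..m₀, (V s)⁻¹ := by
      apply intervalIntegral.integral_nonneg hKx.le
      intro u hu
      have hupos : 0 < u := hxpos.trans_le (hxKx.trans hu.1)
      exact (inv_nonneg).2 (hVpos u ⟨hupos, hu.2.trans hm₀1⟩).le
    have hsplit : ∫ s in x..m₀, (V s)⁻¹
        = (∫ s in x..(K * x), (V s)⁻¹) + ∫ s in (K * x)..m₀, (V s)⁻¹ :=
      (intervalIntegral.integral_add_adjacent_intervals hint1 hint2).symm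
    have hfinal := hC x ⟨hxpos, hxg1⟩
    rw [hginvx, hsplit] at hfinal
    linarith
  · -- positive derivative implies boundedness
    intro hL
    have hev : ∀ᶠ m in nhdsWithin 0 (Set.Ioi 0), L / 2 < g m / m :=
      hslope.eventually_const_lt (by linarith)
    obtain ⟨δ₁', hδ₁'pos, hδ₁'⟩ := aux_ev_19 hev
    set δ₁ := min δ₁' 1 with hδ₁def
    have hδ₁pos : 0 < δ₁ := lt_min hδ₁'pos zero_lt_one
    have hδ₁le1 : δ₁ ≤ 1 := min_le_right _ _
    have hδ₁prop : ∀ m, 0 < m → m < δ₁ → L / 2 * m < g m := by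
      intro m hm hmδ
      have := hδ₁' m hm (lt_of_lt_of_le hmδ (min_le_left _ _))
      rw [lt_div_iff₀ hm] at this
      linarith
    have hhalfmem : δ₁ / 2 ∈ Set.Icc (0:ℝ) 1 := ⟨by positivity, by linarith⟩
    set x₁ := g (δ₁ / 2) with hx₁def
    have hx₁pos : 0 < x₁ := by
      have := hgmono h01 hhalfmem (by positivity)
      rwa [hg0] at this
    set δ₀ := min x₁ (L / 2 * δ₂) with hδ₀def
    have hδ₀pos : 0 < δ₀ := lt_min hx₁pos (by positivity)
    have hδ₀le1 : δ₀ ≤ 1 := by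
      have h1 : δ₀ ≤ x₁ := min_le_left _ _
      have h2 : x₁ ≤ δ₁ / 2 := hgle _ hhalfmem
      linarith
    -- min of V on [δ₀, 1]
    obtain ⟨s₀, hs₀mem, hs₀min⟩ :=
      IsCompact.exists_isMinOn isCompact_Icc ⟨δ₀, le_rfl, hδ₀le1⟩
        (hVcont.mono (Set.Icc_subset_Icc hδ₀pos.le le_rfl))
    have hv : 0 < V s₀ := hVpos s₀ ⟨hδ₀pos.trans_le hs₀mem.1, hs₀mem.2⟩
    set A := 2 / α * Real.log (2 / L) with hAdef
    refine ⟨max (max A (V s₀)⁻¹) 0, le_max_right _ _, fun m hm => ?_⟩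
    obtain ⟨⟨hgi_pos, hgi_le1⟩, hggi, hm_le⟩ := hginv_mem m hm
    have hm0 : 0 < m := hm.1
    have hm1 : m ≤ 1 := hm.2.trans hg1le
    have hint : IntervalIntegrable (fun s => (V s)⁻¹) volume m (ginv m) := by
      apply ContinuousOn.intervalIntegrable
      rw [Set.uIcc_of_le hm_le]
      exact hinvcont m (ginv m) hm0 hgi_le1
    by_cases hcase : m ≤ δ₀
    · -- small m
      have hmx₁ : m ≤ x₁ := hcase.trans (min_le_left _ _)
      have hgi_half : ginv m ≤ δ₁ / 2 := by
        by_contra hlt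
        push_neg at hlt
        have := hgmono hhalfmem ⟨hgi_pos.le, hgi_le1⟩ hlt
        rw [hggi] at this
        exact absurd (lt_of_le_of_lt hmx₁ this) (lt_irrefl m)
      have hgi_δ₁ : ginv m < δ₁ := lt_of_le_of_lt hgi_half (by linarith)
      have h3 : L / 2 * ginv m < g (ginv m) := hδ₁prop (ginv m) hgi_pos hgi_δ₁
      rw [hggi] at h3
      have hL2 : 0 < L / 2 := by positivity
      have h4 : ginv m < 2 / L * m := by
        rw [div_mul_eq_mul_div, lt_div_iff₀ hL]
        nlinarith
      have h5 : 2 / L * m ≤ δ₂ := by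
        have hmle : m ≤ L / 2 * δ₂ := hcase.trans (min_le_right _ _)
        rw [div_mul_eq_mul_div, div_le_iff₀ hL]
        nlinarith
      have hgi_δ₂ : ginv m < δ₂ := lt_of_lt_of_le h4 h5
      have hintc : IntervalIntegrable (fun s => 2 / α * s⁻¹) volume m (ginv m) := by
        apply ContinuousOn.intervalIntegrable
        apply ContinuousOn.mul continuousOn_const
        apply ContinuousOn.inv₀ continuousOn_id
        intro s hs
        rw [Set.uIcc_of_le hm_le] at hs
        exact ne_of_gt (hm0.trans_le hs.1)
      have hptwise : ∀ s ∈ Set.Icc m (ginv m), (V s)⁻¹ ≤ 2 / α * s⁻¹ := by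
        intro s hs
        have hspos : 0 < s := hm0.trans_le hs.1
        have hsδ₂ : s < δ₂ := lt_of_le_of_lt hs.2 hgi_δ₂
        obtain ⟨hlow, _⟩ := hband s hspos hsδ₂
        have h6 : (V s)⁻¹ ≤ (α / 2 * s)⁻¹ := inv_anti₀ (by positivity) hlow.le
        calc (V s)⁻¹ ≤ (α / 2 * s)⁻¹ := h6
          _ = 2 / α * s⁻¹ := by rw [mul_inv, inv_div]
      have hstep : ∫ s in m..(ginv m), (V s)⁻¹ ≤ ∫ s in m..(ginv m), 2 / α * s⁻¹ :=
        intervalIntegral.integral_mono_on hm_le hint hintc hptwise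
      have hcomp : ∫ s in m..(ginv m), 2 / α * s⁻¹ ≤ A := by
        rw [aux_int_19 hm0 hm_le]
        have hratio : ginv m / m ≤ 2 / L := by
          rw [div_le_div_iff₀ hm0 hL]
          nlinarith
        have hratio1 : (0:ℝ) < ginv m / m := by positivity
        have hlog := Real.log_le_log hratio1 hratio
        have h2α : (0:ℝ) ≤ 2 / α := by positivity
        rw [hAdef]
        exact mul_le_mul_of_nonneg_left hlog h2α
      calc ∫ s in m..(ginv m), (V s)⁻¹ ≤ A := hstep.trans hcomp
        _ ≤ max A (V s₀)⁻¹ := le_max_left _ _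
        _ ≤ max (max A (V s₀)⁻¹) 0 := le_max_left _ _
    · -- large m
      push_neg at hcase
      have hIccsub : Set.Icc m (ginv m) ⊆ Set.Icc δ₀ 1 :=
        Set.Icc_subset_Icc hcase.le hgi_le1
      have hptwise : ∀ s ∈ Set.Icc m (ginv m), (V s)⁻¹ ≤ (V s₀)⁻¹ := by
        intro s hs
        exact inv_anti₀ hv (hs₀min (hIccsub hs))
      have hintc : IntervalIntegrable (fun _ : ℝ => (V s₀)⁻¹) volume m (ginv m) :=
        intervalIntegrable_const
      have hstep : ∫ s in m..(ginv m), (V s)⁻¹ ≤ ∫ s in m..(ginv m), (V s₀)⁻¹ :=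
        intervalIntegral.integral_mono_on hm_le hint hintc hptwise
      have hconst : ∫ s in m..(ginv m), (V s₀)⁻¹ = (ginv m - m) * (V s₀)⁻¹ := by
        rw [intervalIntegral.integral_const]; simp [smul_eq_mul]
      have hdiff : ginv m - m ≤ 1 := by linarith
      have hfin : (ginv m - m) * (V s₀)⁻¹ ≤ (V s₀)⁻¹ := by
        have hvi : (0:ℝ) ≤ (V s₀)⁻¹ := by positivity
        nlinarith
      calc ∫ s in m..(ginv m), (V s)⁻¹ ≤ (ginv m - m) * (V s₀)⁻¹ := by
            rw [← hconst]; exact hstep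
        _ ≤ (V s₀)⁻¹ := hfin
        _ ≤ max A (V s₀)⁻¹ := le_max_right _ _
        _ ≤ max (max A (V s₀)⁻¹) 0 := le_max_left _ _
end
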